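/- arXiv:1103.3893 — 6 statements merged into one kernel-verified Lean document; each statement's English description precedes it below -/
import Mathlib

section
/- The integral $-\int_0^\pi \log^2(2\sin(\theta/2))\,d\theta = -\pi^3/12$, i.e. $\int_0^\pi \log^2(2\sin(\theta/2))\,d\theta = \pi^3/12$. -/
open Real MeasureTheory intervalIntegral Filter Topology

noncomputable def LL (r θ : ℝ) : ℝ :=
  Real.log ‖1 - (r:ℂ) * Complex.exp (θ * Complex.I)‖

lemma hasSum_LL (r θ : ℝ) (h0 : 0 ≤ r) (h1 : r < 1) :
    HasSum (fun n : ℕ => r^n * Real.cos (n*θ) / n) (-(LL r θ)) := by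
  have hz : ‖(r:ℂ) * Complex.exp (θ * Complex.I)‖ < 1 := by
    rw [norm_mul, Complex.norm_exp_ofReal_mul_I, mul_one, Complex.norm_real,
      Real.norm_of_nonneg h0]
    exact h1
  have H := Complex.hasSum_taylorSeries_neg_log hz
  have H2 := Complex.hasSum_re H
  convert H2 using 2 with n
  · have harg : ((n:ℂ) * ((θ:ℂ) * Complex.I)) = ((n * θ : ℝ) : ℂ) * Complex.I := by
      push_cast; ring
    rw [mul_pow, ← Complex.ofReal_pow, ← Complex.exp_nat_mul, harg]
    conv_rhs => rw [mul_div_assoc, Complex.re_ofReal_mul, Complex.div_natCast_re,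
      Complex.exp_ofReal_mul_I_re]
    ring
  · rw [Complex.neg_re, Complex.log_re, LL]

lemma integral_cos_int_mul (k : ℤ) (hk : k ≠ 0) :
    ∫ θ in (0:ℝ)..(2*π), Real.cos (k * θ) = 0 := by
  have hk' : (k:ℝ) ≠ 0 := Int.cast_ne_zero.mpr hk
  have := intervalIntegral.integral_comp_mul_left (a := (0:ℝ)) (b := 2*π)
    (fun x => Real.cos x) hk'
  rw [this]
  have h2 : Real.sin ((k:ℝ) * (2*π)) = 0 := by
    have : (k:ℝ) * (2*π) = (2*k : ℤ) * π := by push_cast; ring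
    rw [this, Real.sin_int_mul_pi]
  simp [integral_cos, h2]

lemma cos_orth (n m : ℕ) (hn : 1 ≤ n) (hm : 1 ≤ m) :
    ∫ θ in (0:ℝ)..(2*π), Real.cos (n * θ) * Real.cos (m * θ)
      = if n = m then π else 0 := by
  have key : ∀ θ : ℝ, Real.cos (n * θ) * Real.cos (m * θ)
      = Real.cos (((n:ℝ) - m) * θ) / 2 + Real.cos (((n:ℝ) + m) * θ) / 2 := by
    intro θ
    rw [sub_mul, add_mul, Real.cos_sub, Real.cos_add]; ring
  rw [intervalIntegral.integral_congr (fun θ _ => key θ)]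
  have hint : ∀ c : ℝ, IntervalIntegrable (fun θ => Real.cos (c * θ) / 2)
      volume 0 (2*π) := by
    intro c; apply Continuous.intervalIntegrable; continuity
  rw [intervalIntegral.integral_add (hint _) (hint _)]
  have hnm : ((n:ℤ) + m) ≠ 0 := by positivity
  have e2 := integral_cos_int_mul _ hnm
  push_cast at e2
  have h2 : ∫ θ in (0:ℝ)..(2*π), Real.cos (((n:ℝ) + m) * θ) / 2 = 0 := by
    rw [intervalIntegral.integral_div, e2]; simp
  rw [h2, add_zero]
  by_cases h : n = m
  · subst h
    simp only [sub_self, zero_mul, Real.cos_zero]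
    rw [intervalIntegral.integral_div]
    simp [if_pos rfl, mul_comm]
  · have hne : ((n:ℤ) - m) ≠ 0 := by
      simpa [sub_eq_zero] using h
    have e1 := integral_cos_int_mul _ hne
    push_cast at e1
    rw [intervalIntegral.integral_div, e1]
    simp [h]

noncomputable def aa (r θ : ℝ) (n : ℕ) : ℝ := r^n * Real.cos (n*θ) / n

lemma aa_abs_le (r θ : ℝ) (h0 : 0 ≤ r) (n : ℕ) : |aa r θ n| ≤ r^n := by
  rcases Nat.eq_zero_or_pos n with h | h
  · simp [aa, h]
  · have h1 : (1:ℝ) ≤ n := by exact_mod_cast h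
    rw [aa, abs_div, abs_mul, abs_pow, abs_of_nonneg h0, Nat.abs_cast]
    calc r ^ n * |Real.cos (n*θ)| / n ≤ r ^ n * 1 / 1 := by
          apply div_le_div₀ (by positivity) _ one_pos h1
          exact mul_le_mul_of_nonneg_left (Real.abs_cos_le_one _) (by positivity)
      _ = r ^ n := by ring

lemma aa_summable_norm (r θ : ℝ) (h0 : 0 ≤ r) (h1 : r < 1) :
    Summable (fun n => ‖aa r θ n‖) := by
  apply Summable.of_nonneg_of_le (fun n => norm_nonneg _)
    (fun n => by simpa [Real.norm_eq_abs] using aa_abs_le r θ h0 n)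
  exact summable_geometric_of_lt_one h0 h1

lemma hasSum_sq (r θ : ℝ) (h0 : 0 ≤ r) (h1 : r < 1) :
    HasSum (fun p : ℕ × ℕ => aa r θ p.1 * aa r θ p.2) ((LL r θ)^2) := by
  have h := hasSum_LL r θ h0 h1
  have hs : Summable (fun p : ℕ × ℕ => aa r θ p.1 * aa r θ p.2) :=
    summable_mul_of_summable_norm (aa_summable_norm r θ h0 h1) (aa_summable_norm r θ h0 h1)
  have := (h.mul h hs)
  simpa [aa, pow_two] using this

lemma integral_sq_eq (r : ℝ) (h0 : 0 ≤ r) (h1 : r < 1) :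
    ∫ θ in (0:ℝ)..(2*π), (LL r θ)^2 = π * ∑' n : ℕ, r^(2*n) / (n:ℝ)^2 := by
  set μ := volume.restrict (Set.Ioc (0:ℝ) (2*π)) with hμ
  set F : ℕ × ℕ → ℝ → ℝ := fun p θ => aa r θ p.1 * aa r θ p.2 with hF
  have hca : ∀ k : ℕ, Continuous (fun θ => aa r θ k) := by
    intro k; simp only [aa]; fun_prop
  have hcont : ∀ p : ℕ × ℕ, Continuous (F p) := fun p => (hca p.1).mul (hca p.2)
  have hF_int : ∀ p : ℕ × ℕ, Integrable (F p) μ :=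
    fun p => (hcont p).integrableOn_Ioc
  have hμuniv : (μ Set.univ).toReal = 2*π := by
    rw [hμ, Measure.restrict_apply_univ, Real.volume_Ioc, ENNReal.toReal_ofReal (by linarith [Real.pi_pos])]
    ring
  have hbound : ∀ p : ℕ × ℕ, (∫ θ, ‖F p θ‖ ∂μ) ≤ (2*π) * (r^p.1 * r^p.2) := by
    intro p
    calc (∫ θ, ‖F p θ‖ ∂μ) ≤ ∫ _, r^p.1 * r^p.2 ∂μ := by
          apply integral_mono ((hF_int p).norm) (integrable_const _)
          intro θ
          show ‖F p θ‖ ≤ r ^ p.1 * r ^ p.2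
          rw [Real.norm_eq_abs, hF, abs_mul]
          exact mul_le_mul (aa_abs_le r θ h0 p.1) (aa_abs_le r θ h0 p.2)
            (abs_nonneg _) (by positivity)
      _ = (2*π) * (r^p.1 * r^p.2) := by rw [MeasureTheory.integral_const, smul_eq_mul, measureReal_def, hμuniv]
  have hgeo : Summable (fun n : ℕ => r ^ n) := summable_geometric_of_lt_one h0 h1
  have hF_sum : Summable (fun p : ℕ × ℕ => ∫ θ, ‖F p θ‖ ∂μ) := by
    apply Summable.of_nonneg_of_le
      (fun p => integral_nonneg (fun θ => norm_nonneg _)) hbound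
    exact ((hgeo.mul_of_nonneg hgeo (fun n => by positivity)
      (fun n => by positivity)).mul_left (2*π))
  have key := hasSum_integral_of_summable_integral_norm hF_int hF_sum
  -- identify the inner tsum
  have htsum : ∀ θ : ℝ, (∑' p : ℕ × ℕ, F p θ) = (LL r θ)^2 :=
    fun θ => (hasSum_sq r θ h0 h1).tsum_eq
  simp only [htsum] at key
  -- compute each integral
  have hvals : ∀ p : ℕ × ℕ, (∫ θ, F p θ ∂μ)
      = if p.1 = p.2 then π * r^(2*p.1) / (p.1:ℝ)^2 else 0 := by
    rintro ⟨n, m⟩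
    have hI : (∫ θ, F (n, m) θ ∂μ) = ∫ θ in (0:ℝ)..(2*π), F (n,m) θ :=
      (intervalIntegral.integral_of_le (by positivity)).symm
    rcases Nat.eq_zero_or_pos n with hn | hn
    · subst hn
      have : F (0, m) = fun _ => 0 := by funext θ; simp [hF, aa]
      rw [hI, this]
      simp only [intervalIntegral.integral_zero]
      rcases Nat.eq_zero_or_pos m with hm | hm
      · subst hm; simp
      · simp [Nat.pos_iff_ne_zero.mp hm |> Ne.symm]
    rcases Nat.eq_zero_or_pos m with hm | hm
    · subst hm
      have : F (n, 0) = fun _ => 0 := by funext θ; simp [hF, aa]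
      rw [hI, this]
      simp [Nat.pos_iff_ne_zero.mp hn]
    · have hfe : F (n, m) = fun θ => (r^n * r^m / (n*m)) *
          (Real.cos (n*θ) * Real.cos (m*θ)) := by
        funext θ; simp only [hF, aa]; ring
      rw [hI, hfe, intervalIntegral.integral_const_mul, cos_orth n m hn hm]
      by_cases h : n = m
      · subst h
        have hn0 : (n:ℝ) ≠ 0 := by positivity
        rw [if_pos rfl, if_pos rfl, two_mul, pow_add]
        field_simp
      · simp [h]
  simp only [hvals] at key
  -- diagonal has sum
  have hd : Summable (fun n : ℕ => r^(2*n) / (n:ℝ)^2) := by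
    apply Summable.of_nonneg_of_le (fun n => by positivity)
      (fun n => ?_) (summable_geometric_of_lt_one (by positivity) (by nlinarith : r^2 < 1))
    rcases Nat.eq_zero_or_pos n with h | h
    · simp [h]
    · have h1 : (1:ℝ) ≤ (n:ℝ)^2 := by
        have : (1:ℝ) ≤ (n:ℝ) := by exact_mod_cast h
        nlinarith
      rw [pow_mul]
      exact div_le_self (by positivity) h1
  have hdiag : HasSum (fun p : ℕ × ℕ => if p.1 = p.2 then π * r^(2*p.1) / (p.1:ℝ)^2 else 0)
      (π * ∑' n : ℕ, r^(2*n) / (n:ℝ)^2) := by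
    have hinj : Function.Injective (fun n : ℕ => (n, n) : ℕ → ℕ × ℕ) := by
      intro a b hab; simpa using congrArg Prod.fst hab
    rw [← Function.Injective.hasSum_iff hinj ?_]
    · have := (hd.hasSum.mul_left π)
      convert this using 1
      · rfl
      funext n
      simp [mul_div_assoc]
    · rintro ⟨n, m⟩ hp
      have : n ≠ m := by
        intro h; subst h; exact hp ⟨n, rfl⟩
      simp [this]
  exact (intervalIntegral.integral_of_le (by positivity)).trans (key.unique hdiag)

lemma sin_sq_half' (x : ℝ) : (Real.sin (x/2))^2 = (1 - Real.cos x)/2 := by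
  have h := Real.abs_sin_half x
  have h2 : (Real.sin (x/2))^2 = |Real.sin (x/2)|^2 := (sq_abs _).symm
  rw [h2, h, Real.sq_sqrt]
  nlinarith [Real.cos_le_one x]

lemma abs_sq_eq (r θ : ℝ) :
    ‖1 - (r:ℂ) * Complex.exp (θ * Complex.I)‖^2
      = (1-r)^2 + 4*r*(Real.sin (θ/2))^2 := by
  rw [Complex.sq_norm, Complex.normSq_apply]
  simp only [Complex.sub_re, Complex.sub_im, Complex.one_re, Complex.one_im,
    Complex.re_ofReal_mul, Complex.im_ofReal_mul,
    Complex.exp_ofReal_mul_I_re, Complex.exp_ofReal_mul_I_im]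
  have h1 := Real.sin_sq_add_cos_sq θ
  have h2 := sin_sq_half' θ
  linear_combination r^2 * h1 - 4*r*h2

noncomputable def gg (θ : ℝ) : ℝ :=
  3*(Real.log 2 + Real.log (2*π^2))^2 + 48*θ^(-(1/2) : ℝ) + 48*(2*π-θ)^(-(1/2) : ℝ)

lemma neg_log_le (x : ℝ) (hx : 0 < x) : -Real.log x ≤ 4 * x^(-(1/4) : ℝ) := by
  have h := Real.log_le_rpow_div (x := x⁻¹) (inv_nonneg.mpr hx.le) (by norm_num : (0:ℝ) < 1/4)
  rw [Real.log_inv, Real.inv_rpow hx.le, ← Real.rpow_neg hx.le] at h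
  calc -Real.log x ≤ x ^ (-(1/4):ℝ) / (1/4) := h
    _ = 4 * x^(-(1/4):ℝ) := by ring

lemma sin_half_lower {θ : ℝ} (h0 : 0 < θ) (h2 : θ < 2*π) :
    θ * (2*π - θ) / (2*π^2) ≤ Real.sin (θ/2) := by
  have hπ := Real.pi_pos
  rcases le_or_gt θ π with h | h
  · have hx := Real.mul_le_sin (x := θ/2) (by linarith) (by linarith)
    calc θ * (2*π - θ) / (2*π^2) ≤ θ / π := by
          rw [div_le_div_iff₀ (by positivity) (by positivity)]
          nlinarith [mul_pos (mul_pos h0 h0) hπ]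
      _ = 2/π * (θ/2) := by field_simp
      _ ≤ Real.sin (θ/2) := hx
  · have heq : Real.sin (θ/2) = Real.sin ((2*π - θ)/2) := by
      rw [show (2*π - θ)/2 = π - θ/2 by ring, Real.sin_pi_sub]
    have hx := Real.mul_le_sin (x := (2*π-θ)/2) (by linarith) (by linarith)
    rw [heq]
    calc θ * (2*π - θ) / (2*π^2) ≤ (2*π - θ) / π := by
          rw [div_le_div_iff₀ (by positivity) (by positivity)]
          have hpos : 0 < 2*π - θ := by linarith
          nlinarith [mul_pos (mul_pos hpos hpos) hπ]
      _ = 2/π * ((2*π-θ)/2) := by field_simp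
      _ ≤ Real.sin ((2*π-θ)/2) := hx

lemma sum_sq_le (c u v : ℝ) : (c + u + v)^2 ≤ 3*c^2 + 3*u^2 + 3*v^2 := by
  nlinarith [sq_nonneg (c-u), sq_nonneg (c-v), sq_nonneg (u-v)]

lemma LL_sq_le_gg {r θ : ℝ} (hr : r ∈ Set.Icc (1/2 : ℝ) 1) (hθ : θ ∈ Set.Ioo 0 (2*π)) :
    (LL r θ)^2 ≤ gg θ := by
  obtain ⟨hr1, hr2⟩ := hr
  obtain ⟨hθ1, hθ2⟩ := hθ
  have hπ := Real.pi_pos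
  set s := Real.sin (θ/2) with hs
  have hs0 : 0 < s := Real.sin_pos_of_pos_of_lt_pi (by linarith) (by linarith)
  have hs1 : s ≤ 1 := Real.sin_le_one _
  set A := ‖1 - (r:ℂ) * Complex.exp (θ * Complex.I)‖ with hA
  have hA0 : 0 ≤ A := norm_nonneg _
  have hAsq : A^2 = (1-r)^2 + 4*r*s^2 := abs_sq_eq r θ
  have hA_le : A ≤ 2 := by
    rw [hA]
    calc ‖1 - (r:ℂ) * Complex.exp (θ * Complex.I)‖
        ≤ ‖(1:ℂ)‖ + ‖(r:ℂ) * Complex.exp (θ * Complex.I)‖ := norm_sub_le _ _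
      _ = 1 + |r| := by
          simp [Complex.norm_exp_ofReal_mul_I]
      _ ≤ 2 := by rw [abs_of_nonneg (by linarith)]; linarith
  have hA_ge : s ≤ A := by
    have h1 : s^2 ≤ A^2 := by nlinarith
    have h2 := Real.sqrt_le_sqrt h1
    rwa [Real.sqrt_sq hs0.le, Real.sqrt_sq hA0] at h2
  have hApos : 0 < A := lt_of_lt_of_le hs0 hA_ge
  have hlog2 : (0:ℝ) ≤ Real.log 2 := Real.log_nonneg one_le_two
  have hlogs : Real.log s ≤ 0 := Real.log_nonpos hs0.le hs1
  have habs : |Real.log A| ≤ Real.log 2 - Real.log s := by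
    rw [abs_le]
    constructor
    · have := Real.log_le_log hs0 hA_ge
      linarith
    · have := Real.log_le_log hApos hA_le
      linarith
  -- lower bound on log s
  have hti : 0 < 2*π - θ := by linarith
  have hqpos : 0 < θ * (2*π - θ) / (2*π^2) := div_pos (mul_pos hθ1 hti) (by positivity)
  have hls : Real.log (θ * (2*π - θ) / (2*π^2)) ≤ Real.log s :=
    Real.log_le_log hqpos (sin_half_lower hθ1 hθ2)
  have hsplit : Real.log (θ * (2*π - θ) / (2*π^2))
      = Real.log θ + Real.log (2*π - θ) - Real.log (2*π^2) := by
    rw [Real.log_div (mul_pos hθ1 hti).ne' (by positivity), Real.log_mul hθ1.ne' hti.ne']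
  have hu := neg_log_le θ hθ1
  have hv := neg_log_le (2*π - θ) hti
  set u : ℝ := 4 * θ^(-(1/4):ℝ) with hu'
  set v : ℝ := 4 * (2*π-θ)^(-(1/4):ℝ) with hv'
  have hu0 : 0 ≤ u := by positivity
  have hv0 : 0 ≤ v := by positivity
  have hneglogs : -Real.log s ≤ Real.log (2*π^2) + u + v := by
    rw [hsplit] at hls
    linarith
  have hlogpi : (0:ℝ) ≤ Real.log (2*π^2) := by
    apply Real.log_nonneg
    nlinarith [Real.pi_gt_three]
  set c : ℝ := Real.log 2 + Real.log (2*π^2) with hc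
  have hLL : |LL r θ| ≤ c + u + v := by
    rw [LL, ← hA]
    calc |Real.log A| ≤ Real.log 2 - Real.log s := habs
      _ ≤ c + u + v := by rw [hc]; linarith
  have hLLsq : (LL r θ)^2 ≤ (c + u + v)^2 := by
    rw [← sq_abs (LL r θ)]
    apply pow_le_pow_left₀ (abs_nonneg _) hLL
  have hexp : (c + u + v)^2 ≤ 3*c^2 + 3*u^2 + 3*v^2 := sum_sq_le c u v
  have hu2 : u^2 = 16 * θ^(-(1/2):ℝ) := by
    rw [hu', mul_pow, ← Real.rpow_natCast (θ^(-(1/4):ℝ)) 2, ← Real.rpow_mul hθ1.le]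
    norm_num
  have hv2 : v^2 = 16 * (2*π-θ)^(-(1/2):ℝ) := by
    rw [hv', mul_pow, ← Real.rpow_natCast ((2*π-θ)^(-(1/4):ℝ)) 2,
      ← Real.rpow_mul (by linarith : (0:ℝ) ≤ 2*π-θ)]
    norm_num
  calc (LL r θ)^2 ≤ 3*c^2 + 3*u^2 + 3*v^2 := hLLsq.trans hexp
    _ = gg θ := by rw [hu2, hv2, gg, hc]; ring

lemma gg_integrable : IntervalIntegrable gg volume 0 (2*π) := by
  have h1 : IntervalIntegrable (fun _ : ℝ => 3*(Real.log 2 + Real.log (2*π^2))^2)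
      volume 0 (2*π) := intervalIntegrable_const
  have h2 : IntervalIntegrable (fun θ : ℝ => 48*θ^(-(1/2):ℝ)) volume 0 (2*π) :=
    (intervalIntegrable_rpow' (by norm_num)).const_mul 48
  have h3 : IntervalIntegrable (fun θ : ℝ => 48*(2*π-θ)^(-(1/2):ℝ)) volume 0 (2*π) := by
    have := ((intervalIntegrable_rpow' (r := (-(1/2):ℝ)) (by norm_num)
      (a := 0) (b := 2*π)).comp_sub_left (2*π)).const_mul 48
    simpa using this.symm
  exact (h1.add h2).add h3

lemma LL_measurable (r : ℝ) : Measurable (fun θ => (LL r θ)^2) := by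
  apply Measurable.pow_const
  exact Real.measurable_log.comp
    (Continuous.measurable (continuous_norm.comp (by continuity)))

lemma ae_ne_two_pi : ∀ᵐ θ : ℝ, θ ≠ 2*π := by
  rw [MeasureTheory.ae_iff]
  have h : {a : ℝ | ¬a ≠ 2*π} = {2*π} := by ext; simp
  rw [h]
  exact measure_singleton _

lemma LL_one_pos {θ : ℝ} (hθ : θ ∈ Set.Ioo 0 (2*π)) :
    0 < ‖1 - ((1:ℝ):ℂ) * Complex.exp (θ * Complex.I)‖ := by
  have hπ := Real.pi_pos
  have hs0 : 0 < Real.sin (θ/2) :=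
    Real.sin_pos_of_pos_of_lt_pi (by linarith [hθ.1]) (by linarith [hθ.2])
  have h := abs_sq_eq 1 θ
  nlinarith [norm_nonneg (1 - ((1:ℝ):ℂ) * Complex.exp (θ * Complex.I))]

lemma tendsto_int :
    Tendsto (fun r => ∫ θ in (0:ℝ)..(2*π), (LL r θ)^2) (𝓝[<] (1:ℝ))
      (𝓝 (∫ θ in (0:ℝ)..(2*π), (LL 1 θ)^2)) := by
  have hπ := Real.pi_pos
  apply intervalIntegral.tendsto_integral_filter_of_dominated_convergence gg
  · exact Eventually.of_forall fun r => ((LL_measurable r).aestronglyMeasurable).restrict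
  · filter_upwards [Ioo_mem_nhdsLT_of_mem
      (by constructor <;> norm_num : (1:ℝ) ∈ Set.Ioc (1/2 : ℝ) 1)] with r hr
    filter_upwards [ae_ne_two_pi] with θ hne hmem
    rw [Set.uIoc_of_le (by positivity)] at hmem
    have hmem' : θ ∈ Set.Ioo 0 (2*π) := ⟨hmem.1, lt_of_le_of_ne hmem.2 hne⟩
    rw [Real.norm_eq_abs, abs_of_nonneg (sq_nonneg _)]
    exact LL_sq_le_gg ⟨hr.1.le, hr.2.le⟩ hmem'
  · exact gg_integrable
  · filter_upwards [ae_ne_two_pi] with θ hne hmem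
    rw [Set.uIoc_of_le (by positivity)] at hmem
    have hmem' : θ ∈ Set.Ioo 0 (2*π) := ⟨hmem.1, lt_of_le_of_ne hmem.2 hne⟩
    have hcont : ContinuousAt (fun r : ℝ => LL r θ) 1 := by
      apply ContinuousAt.comp
      · exact Real.continuousAt_log (ne_of_gt (LL_one_pos hmem'))
      · exact (continuous_norm.comp (by continuity)).continuousAt
    exact ((hcont.tendsto).mono_left nhdsWithin_le_nhds).pow 2

lemma abel_limit :
    Tendsto (fun r : ℝ => π * ∑' n : ℕ, r^(2*n)/(n:ℝ)^2) (𝓝[<] (1:ℝ)) (𝓝 (π^3/6)) := by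
  have hb : HasSum (fun n : ℕ => (1:ℝ)/(n:ℝ)^2) (π^2/6) := hasSum_zeta_two
  have h := Real.tendsto_tsum_powerSeries_nhdsWithin_lt hb.tendsto_sum_nat
  have hsq : Tendsto (fun r : ℝ => r^2) (𝓝[<] (1:ℝ)) (𝓝[<] (1:ℝ)) := by
    rw [tendsto_nhdsWithin_iff]
    constructor
    · have h1 : Tendsto (fun r : ℝ => r^2) (𝓝 1) (𝓝 1) := by
        simpa using (continuous_pow 2).tendsto (1:ℝ)
      exact h1.mono_left nhdsWithin_le_nhds
    · filter_upwards [Ioo_mem_nhdsLT_of_mem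
        (by constructor <;> norm_num : (1:ℝ) ∈ Set.Ioc 0 1)] with r hr
      simp only [Set.mem_Iio]
      nlinarith [hr.1, hr.2]
  have hfe : (fun r : ℝ => π * ∑' n : ℕ, r^(2*n)/(n:ℝ)^2)
      = (fun x : ℝ => π * ∑' n : ℕ, (1:ℝ)/(n:ℝ)^2 * x^n) ∘ (fun r => r^2) := by
    funext r
    simp only [Function.comp_apply]
    congr 1
    exact tsum_congr fun n => by rw [pow_mul]; ring
  rw [hfe, show π^3/6 = π * (π^2/6) by ring]
  exact (h.const_mul π).comp hsq

lemma integral_two_pi : ∫ θ in (0:ℝ)..(2*π), (LL 1 θ)^2 = π^3/6 := by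
  have heq : ∀ᶠ r in 𝓝[<] (1:ℝ),
      (∫ θ in (0:ℝ)..(2*π), (LL r θ)^2) = π * ∑' n : ℕ, r^(2*n)/(n:ℝ)^2 := by
    filter_upwards [Ioo_mem_nhdsLT_of_mem
      (by constructor <;> norm_num : (1:ℝ) ∈ Set.Ioc 0 1)] with r hr
    exact integral_sq_eq r hr.1.le hr.2
  exact tendsto_nhds_unique (tendsto_int.congr' heq) abel_limit

lemma LL_one_eq {θ : ℝ} (h1 : 0 ≤ θ) (h2 : θ ≤ 2*π) :
    LL 1 θ = Real.log (2 * Real.sin (θ/2)) := by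
  have hπ := Real.pi_pos
  have hs : 0 ≤ Real.sin (θ/2) :=
    Real.sin_nonneg_of_nonneg_of_le_pi (by linarith) (by linarith)
  have h := abs_sq_eq 1 θ
  have habs : ‖1 - ((1:ℝ):ℂ) * Complex.exp (θ * Complex.I)‖
      = 2 * Real.sin (θ/2) := by
    have h0 : (0:ℝ) ≤ ‖1 - ((1:ℝ):ℂ) * Complex.exp (θ * Complex.I)‖ :=
      norm_nonneg _
    nlinarith [h, h0]
  rw [LL, habs]

lemma ls_integrable : IntervalIntegrable (fun θ => (Real.log (2 * Real.sin (θ/2)))^2)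
    volume 0 (2*π) := by
  have hπ := Real.pi_pos
  rw [intervalIntegrable_iff, Set.uIoc_of_le (by positivity)]
  apply Integrable.mono' (gg_integrable.1)
  · apply Measurable.aestronglyMeasurable
    apply Measurable.pow_const
    exact Real.measurable_log.comp (by fun_prop : Continuous fun θ:ℝ => 2 * Real.sin (θ/2)).measurable
  · rw [MeasureTheory.ae_restrict_iff' measurableSet_Ioc]
    filter_upwards [ae_ne_two_pi] with θ hne hmem
    have hmem' : θ ∈ Set.Ioo 0 (2*π) := ⟨hmem.1, lt_of_le_of_ne hmem.2 hne⟩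
    rw [Real.norm_eq_abs, abs_of_nonneg (sq_nonneg _),
      ← LL_one_eq hmem'.1.le (le_of_lt hmem'.2)]
    exact LL_sq_le_gg ⟨by norm_num, le_refl 1⟩ hmem'

theorem ls3_pi : ∫ θ in (0:ℝ)..π, (Real.log (2 * Real.sin (θ/2)))^2 = π^3 / 12 := by
  have hπ := Real.pi_pos
  have hfull : ∫ θ in (0:ℝ)..(2*π), (Real.log (2 * Real.sin (θ/2)))^2 = π^3/6 := by
    rw [← integral_two_pi]
    apply intervalIntegral.integral_congr
    intro θ hθ
    rw [Set.uIcc_of_le (by positivity)] at hθ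
    simp only
    rw [LL_one_eq hθ.1 hθ.2]
  have hsym : ∫ θ in (0:ℝ)..π, (Real.log (2 * Real.sin (θ/2)))^2
      = ∫ θ in π..(2*π), (Real.log (2 * Real.sin (θ/2)))^2 := by
    have h := intervalIntegral.integral_comp_sub_left (a := (0:ℝ)) (b := π)
      (fun θ => (Real.log (2 * Real.sin (θ/2)))^2) (2*π)
    rw [show 2*π - π = π by ring, show 2*π - 0 = 2*π by ring] at h
    rw [← h]
    apply intervalIntegral.integral_congr
    intro θ _
    simp only
    rw [show (2*π - θ)/2 = π - θ/2 by ring, Real.sin_pi_sub]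
  have hsplit : (∫ θ in (0:ℝ)..π, (Real.log (2 * Real.sin (θ/2)))^2)
      + ∫ θ in π..(2*π), (Real.log (2 * Real.sin (θ/2)))^2
      = ∫ θ in (0:ℝ)..(2*π), (Real.log (2 * Real.sin (θ/2)))^2 := by
    apply intervalIntegral.integral_add_adjacent_intervals
    · apply ls_integrable.mono_set
      rw [Set.uIcc_of_le (by positivity), Set.uIcc_of_le (by positivity)]
      exact Set.Icc_subset_Icc (le_refl _) (by linarith)
    · apply ls_integrable.mono_set
      rw [Set.uIcc_of_le (by linarith), Set.uIcc_of_le (by positivity)]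
      exact Set.Icc_subset_Icc (by positivity) (le_refl _)
  rw [hfull, ← hsym] at hsplit
  linarith
end

section
/- The generating function identity $-\sum_{m=0}^\infty \mathrm{Ls}_{m+1}(\pi)\frac{x^m}{m!} = \pi\frac{\Gamma(1+x)}{\Gamma(1+x/2)^2}$ holds for real $x$ with $|x|<1$, where $\mathrm{Ls}_{m+1}(\pi) = -\int_0^\pi \log^m(2\sin(\theta/2))\,d\theta$. -/
open Real MeasureTheory Set
open scoped ENNReal NNReal

lemma ls_aux_pos {θ : ℝ} (h1 : 0 < θ) (h2 : θ ≤ π) : 0 < 2 * Real.sin (θ/2) := by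
  have : 0 < Real.sin (θ/2) := Real.sin_pos_of_pos_of_lt_pi (by linarith)
    (by linarith [Real.pi_pos])
  linarith

lemma ls_aux_lb {θ : ℝ} (h1 : 0 < θ) (h2 : θ ≤ π) : θ/2 ≤ 2 * Real.sin (θ/2) := by
  have h := Real.mul_le_sin (x := θ/2) (by linarith) (by linarith)
  have hπ : π ≤ 4 := by linarith [Real.pi_le_four]
  have hπ0 := Real.pi_pos
  have h' : θ / π ≤ Real.sin (θ/2) := by
    calc θ / π = 2/π * (θ/2) := by ring
    _ ≤ _ := h
  rw [div_le_iff₀ hπ0] at h'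
  nlinarith

lemma ls_aux_dom_int {y : ℝ} (hy : -1 < y) (hy' : y ≤ 0) :
    IntegrableOn (fun θ : ℝ => (2:ℝ) ^ (-y) + (2:ℝ) ^ (-y) * θ ^ y) (Set.Ioc 0 π) := by
  apply Integrable.add (integrable_const _)
  apply Integrable.const_mul
  exact (intervalIntegral.intervalIntegrable_rpow' (a := 0) (b := π) hy).1

-- pointwise bound
lemma ls_aux_ptbd {x θ : ℝ} (hx : |x| < 1) (h1 : 0 < θ) (h2 : θ ≤ π) :
    Real.exp (|x| * |Real.log (2 * Real.sin (θ/2))|)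
      ≤ (2:ℝ) ^ (|x|) + (2:ℝ) ^ (|x|) * θ ^ (-|x|) := by
  set t := 2 * Real.sin (θ/2) with ht
  have htpos : 0 < t := ls_aux_pos h1 h2
  have htlb : θ/2 ≤ t := ls_aux_lb h1 h2
  have ht2 : t ≤ 2 := by
    have := Real.sin_le_one (θ/2); linarith
  rcases le_or_gt 0 (Real.log t) with hl | hl
  · rw [abs_of_nonneg hl]
    have : Real.exp (|x| * Real.log t) = t ^ |x| := by
      rw [Real.rpow_def_of_pos htpos, mul_comm]
    rw [this]
    have h1' : t ^ |x| ≤ 2 ^ |x| := Real.rpow_le_rpow htpos.le ht2 (abs_nonneg x)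
    have h2' : 0 ≤ (2:ℝ) ^ (|x|) * θ ^ (-|x|) := by positivity
    linarith
  · rw [abs_of_neg hl]
    have : Real.exp (|x| * -Real.log t) = t ^ (-|x|) := by
      rw [Real.rpow_def_of_pos htpos]; ring_nf
    rw [this]
    have h1' : t ^ (-|x|) ≤ (θ/2) ^ (-|x|) :=
      Real.rpow_le_rpow_of_nonpos (by linarith) htlb (neg_nonpos.mpr (abs_nonneg x))
    have h2' : (θ/2 : ℝ) ^ (-|x|) = 2 ^ |x| * θ ^ (-|x|) := by
      rw [Real.div_rpow h1.le (by norm_num), Real.rpow_neg (by norm_num : (0:ℝ) ≤ 2),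
        Real.rpow_neg h1.le]
      rw [div_eq_mul_inv, inv_inv]
      ring
    have h3' : 0 ≤ (2:ℝ) ^ (|x|) := by positivity
    rw [h2'] at h1'
    linarith

lemma ls_meas (m : ℕ) : Measurable (fun θ : ℝ => (Real.log (2 * Real.sin (θ/2)))^m) :=
  ((Real.measurable_log.comp (by fun_prop)).pow_const m)

lemma ls_interchange {x : ℝ} (hx : |x| < 1) :
    ∫ θ in Set.Ioc (0:ℝ) π, (2 * Real.sin (θ/2)) ^ x
      = ∑' m : ℕ, (∫ θ in Set.Ioc (0:ℝ) π,
          (Real.log (2 * Real.sin (θ/2)))^m) * x^m / m.factorial := by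
  have hmeas : ∀ m : ℕ, AEStronglyMeasurable
      (fun θ : ℝ => (Real.log (2 * Real.sin (θ/2)))^m * x^m / m.factorial)
      (volume.restrict (Set.Ioc 0 π)) := by
    intro m
    exact (((ls_meas m).mul_const _).div_const _).aestronglyMeasurable
  have hsum : ∀ θ : ℝ,
      HasSum (fun m : ℕ => |Real.log (2 * Real.sin (θ/2))|^m * |x|^m / m.factorial)
        (Real.exp (|x| * |Real.log (2 * Real.sin (θ/2))|)) := by
    intro θ
    have := (Real.exp_eq_exp_ℝ ▸
      NormedSpace.expSeries_div_hasSum_exp (|x| * |Real.log (2 * Real.sin (θ/2))|))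
    convert this using 2 with m
    · rfl
    rw [mul_pow]; ring
  have hnorm : ∀ m : ℕ, ∀ θ : ℝ,
      ‖(Real.log (2 * Real.sin (θ/2)))^m * x^m / m.factorial‖
        = |Real.log (2 * Real.sin (θ/2))|^m * |x|^m / m.factorial := by
    intro m θ
    rw [norm_div, norm_mul, norm_pow, norm_pow]
    simp [abs_of_nonneg (Nat.cast_nonneg (m.factorial) : (0:ℝ) ≤ m.factorial)]
  have hbound : ∑' m : ℕ, ∫⁻ θ in Set.Ioc (0:ℝ) π,
      ‖(Real.log (2 * Real.sin (θ/2)))^m * x^m / m.factorial‖₊ ≠ ⊤ := by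
    have hae : ∀ m : ℕ, AEMeasurable
        (fun θ : ℝ => (‖(Real.log (2 * Real.sin (θ/2)))^m * x^m / m.factorial‖₊ : ℝ≥0∞))
        (volume.restrict (Set.Ioc 0 π)) := fun m => (hmeas m).enorm
    rw [← MeasureTheory.lintegral_tsum hae]
    have hle : ∫⁻ θ in Set.Ioc (0:ℝ) π,
        ∑' m : ℕ, (‖(Real.log (2 * Real.sin (θ/2)))^m * x^m / m.factorial‖₊ : ℝ≥0∞)
        ≤ ∫⁻ θ in Set.Ioc (0:ℝ) π,
          ENNReal.ofReal ((2:ℝ) ^ (|x|) + (2:ℝ) ^ (|x|) * θ ^ (-|x|)) := by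
      apply setLIntegral_mono' measurableSet_Ioc
      intro θ hθ
      have hts : ∑' m : ℕ, (‖(Real.log (2 * Real.sin (θ/2)))^m * x^m / m.factorial‖₊ : ℝ≥0∞)
          = ENNReal.ofReal (Real.exp (|x| * |Real.log (2 * Real.sin (θ/2))|)) := by
        rw [← (hsum θ).tsum_eq, ENNReal.ofReal_tsum_of_nonneg
          (fun m => by positivity) (hsum θ).summable]
        congr 1 with m
        rw [← hnorm m θ, ← enorm_eq_nnnorm, ← ofReal_norm]
      rw [hts]
      exact ENNReal.ofReal_le_ofReal (ls_aux_ptbd hx hθ.1 hθ.2)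
    refine ne_of_lt (lt_of_le_of_lt hle ?_)
    set y : ℝ := -|x| with hy
    have hint : IntegrableOn (fun θ : ℝ => (2:ℝ) ^ (-y) + (2:ℝ) ^ (-y) * θ ^ y)
        (Set.Ioc 0 π) := ls_aux_dom_int (by simp [hy]; linarith [abs_nonneg x, hx])
      (by simp [hy])
    simpa [hy, neg_neg] using hint.lintegral_lt_top
  have key := MeasureTheory.integral_tsum hmeas hbound
  rw [show (fun θ : ℝ => ∑' m : ℕ, (Real.log (2 * Real.sin (θ/2)))^m * x^m / m.factorial)
    = _ from rfl] at key
  have hcongr : ∫ θ in Set.Ioc (0:ℝ) π, (2 * Real.sin (θ/2)) ^ x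
      = ∫ θ in Set.Ioc (0:ℝ) π,
        ∑' m : ℕ, (Real.log (2 * Real.sin (θ/2)))^m * x^m / m.factorial := by
    apply setIntegral_congr_fun measurableSet_Ioc
    intro θ hθ
    have hpos := ls_aux_pos hθ.1 hθ.2
    have hs : HasSum (fun m : ℕ => (Real.log (2 * Real.sin (θ/2)))^m * x^m / m.factorial)
        (Real.exp (x * Real.log (2 * Real.sin (θ/2)))) := by
      have := (Real.exp_eq_exp_ℝ ▸
        NormedSpace.expSeries_div_hasSum_exp (x * Real.log (2 * Real.sin (θ/2))))
      convert this using 2 with m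
      · rfl
      rw [mul_pow]; ring
    simp only
    rw [Real.rpow_def_of_pos hpos, mul_comm (Real.log (2 * Real.sin (θ/2))) x,
      ← hs.tsum_eq]
  rw [hcongr, key]
  congr 1 with m
  rw [MeasureTheory.integral_div, MeasureTheory.integral_mul_const]

-- substitution lemma
lemma ls_subst (x : ℝ) :
    ∫ t in Set.Ioo (0:ℝ) 1, t ^ ((x-1)/2) * (1-t) ^ (-(1:ℝ)/2)
      = ∫ θ in Set.Ioo (0:ℝ) π, Real.sin (θ/2) ^ x := by
  have himg : (fun θ : ℝ => Real.sin (θ/2) ^ (2:ℕ)) '' Set.Ioo 0 π = Set.Ioo 0 1 := by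
    ext t
    constructor
    · rintro ⟨θ, hθ, rfl⟩
      have h1 : 0 < Real.sin (θ/2) := Real.sin_pos_of_pos_of_lt_pi (by linarith [hθ.1])
        (by linarith [hθ.2, Real.pi_pos])
      have hc : 0 < Real.cos (θ/2) := Real.cos_pos_of_mem_Ioo
        ⟨by linarith [hθ.1, Real.pi_pos], by linarith [hθ.2]⟩
      constructor <;> nlinarith [Real.sin_sq_add_cos_sq (θ/2)]
    · intro ht
      refine ⟨2 * Real.arcsin (Real.sqrt t), ?_, ?_⟩
      · have h1 : 0 < Real.sqrt t := Real.sqrt_pos.mpr ht.1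
        have h2 : Real.sqrt t < 1 := by
          rw [show (1:ℝ) = Real.sqrt 1 by simp]
          exact Real.sqrt_lt_sqrt ht.1.le ht.2
        have ha1 : 0 < Real.arcsin (Real.sqrt t) := Real.arcsin_pos.mpr h1
        have ha2 : Real.arcsin (Real.sqrt t) < π/2 := Real.arcsin_lt_pi_div_two.mpr h2
        constructor <;> [linarith; linarith]
      · simp only
        have : Real.sin (2 * Real.arcsin (Real.sqrt t) / 2) = Real.sqrt t := by
          rw [show 2 * Real.arcsin (Real.sqrt t) / 2 = Real.arcsin (Real.sqrt t) by ring]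
          exact Real.sin_arcsin (by linarith [Real.sqrt_nonneg t]) (by
            rw [show (1:ℝ) = Real.sqrt 1 by simp]
            exact Real.sqrt_le_sqrt ht.2.le)
        rw [this, sq, Real.mul_self_sqrt ht.1.le]
  have hinj : Set.InjOn (fun θ : ℝ => Real.sin (θ/2) ^ (2:ℕ)) (Set.Ioo 0 π) := by
    intro a ha b hb hab
    simp only at hab
    have hsa : 0 < Real.sin (a/2) := Real.sin_pos_of_pos_of_lt_pi (by linarith [ha.1])
      (by linarith [ha.2, Real.pi_pos])
    have hsb : 0 < Real.sin (b/2) := Real.sin_pos_of_pos_of_lt_pi (by linarith [hb.1])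
      (by linarith [hb.2, Real.pi_pos])
    have h : Real.sin (a/2) = Real.sin (b/2) := by nlinarith [sq_nonneg (Real.sin (a/2) - Real.sin (b/2)), sq_nonneg (Real.sin (a/2) + Real.sin (b/2))]
    have := Real.injOn_sin (show a/2 ∈ _ from ⟨by linarith [ha.1, Real.pi_pos], by linarith [ha.2]⟩)
      (show b/2 ∈ _ from ⟨by linarith [hb.1, Real.pi_pos], by linarith [hb.2]⟩) h
    linarith
  have hderiv : ∀ θ ∈ Set.Ioo (0:ℝ) π,
      HasDerivWithinAt (fun θ : ℝ => Real.sin (θ/2) ^ (2:ℕ))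
        (Real.sin (θ/2) * Real.cos (θ/2)) (Set.Ioo 0 π) θ := by
    intro θ hθ
    have h1 : HasDerivAt (fun θ : ℝ => Real.sin (θ/2)) (Real.cos (θ/2) * (1/2)) θ := by
      have := (Real.hasDerivAt_sin (θ/2)).comp θ ((hasDerivAt_id θ).div_const 2)
      exact this
    have := h1.fun_pow 2
    convert this.hasDerivWithinAt using 1
    · rfl
    · rfl
    ring
  have := MeasureTheory.integral_image_eq_integral_abs_deriv_smul measurableSet_Ioo hderiv hinj
    (fun t => t ^ ((x-1)/2) * (1-t) ^ (-(1:ℝ)/2))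
  rw [himg] at this
  rw [this]
  apply setIntegral_congr_fun measurableSet_Ioo
  intro θ hθ
  have hs : 0 < Real.sin (θ/2) := Real.sin_pos_of_pos_of_lt_pi (by linarith [hθ.1])
    (by linarith [hθ.2, Real.pi_pos])
  have hc : 0 < Real.cos (θ/2) := Real.cos_pos_of_mem_Ioo
    ⟨by linarith [hθ.1, Real.pi_pos], by linarith [hθ.2]⟩
  simp only [smul_eq_mul]
  rw [abs_of_pos (by positivity)]
  rw [show (1:ℝ) - Real.sin (θ/2) ^ (2:ℕ) = Real.cos (θ/2) ^ (2:ℕ) by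
    nlinarith [Real.sin_sq_add_cos_sq (θ/2)]]
  rw [← Real.rpow_natCast (Real.sin (θ/2)) 2, ← Real.rpow_natCast (Real.cos (θ/2)) 2,
    ← Real.rpow_mul hs.le, ← Real.rpow_mul hc.le]
  rw [show ((2:ℕ):ℝ) * ((x-1)/2) = x - 1 by push_cast; ring,
    show ((2:ℕ):ℝ) * (-1/2 : ℝ) = -1 by push_cast; ring]
  rw [Real.rpow_neg_one]
  rw [show Real.sin (θ/2) * Real.cos (θ/2) * (Real.sin (θ/2) ^ (x-1) * (Real.cos (θ/2))⁻¹)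
    = Real.sin (θ/2) * Real.sin (θ/2) ^ (x-1) * (Real.cos (θ/2) * (Real.cos (θ/2))⁻¹) by ring,
    mul_inv_cancel₀ hc.ne', mul_one]
  nth_rewrite 1 [← Real.rpow_one (Real.sin (θ/2))]
  rw [← Real.rpow_add hs]
  ring_nf

lemma ls_beta {x : ℝ} (hx1 : -1 < x) :
    ∫ t in Set.Ioo (0:ℝ) 1, t ^ ((x-1)/2) * (1-t) ^ (-(1:ℝ)/2)
      = Real.Gamma ((x+1)/2) * Real.Gamma (1/2) / Real.Gamma (x/2 + 1) := by
  have h1 : (0:ℝ) < (x+1)/2 := by linarith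
  have h2 : (0:ℝ) < x/2 + 1 := by linarith
  have hbeta := Complex.Gamma_mul_Gamma_eq_betaIntegral
    (s := (((x+1)/2 : ℝ) : ℂ)) (t := (((1:ℝ)/2 : ℝ) : ℂ))
    (by simpa using h1) (by norm_num)
  have hval : Complex.betaIntegral (((x+1)/2 : ℝ) : ℂ) (((1:ℝ)/2 : ℝ) : ℂ)
      = ((∫ t in (0:ℝ)..1, t ^ ((x-1)/2) * (1-t) ^ (-(1:ℝ)/2) : ℝ) : ℂ) := by
    rw [Complex.betaIntegral, ← intervalIntegral.integral_ofReal]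
    apply intervalIntegral.integral_congr
    intro t ht
    rw [Set.uIcc_of_le (by norm_num : (0:ℝ) ≤ 1)] at ht
    have e1 : ((((x+1)/2 : ℝ)) : ℂ) - 1 = (((x-1)/2 : ℝ) : ℂ) := by push_cast; ring
    have e2 : ((((1:ℝ)/2 : ℝ)) : ℂ) - 1 = ((-(1:ℝ)/2 : ℝ) : ℂ) := by push_cast; ring
    have e3 : (1 : ℂ) - (t : ℂ) = ((1 - t : ℝ) : ℂ) := by push_cast; ring
    simp only [e1, e2, e3]
    rw [← Complex.ofReal_cpow ht.1, ← Complex.ofReal_cpow (by linarith [ht.2] : (0:ℝ) ≤ 1 - t)]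
    push_cast
    ring
  have hsum : ((((x+1)/2 : ℝ)) : ℂ) + (((1:ℝ)/2 : ℝ) : ℂ) = ((x/2 + 1 : ℝ) : ℂ) := by
    push_cast; ring
  rw [hval, hsum, Complex.Gamma_ofReal, Complex.Gamma_ofReal, Complex.Gamma_ofReal] at hbeta
  rw [← Complex.ofReal_mul, ← Complex.ofReal_mul] at hbeta
  have hreal : Real.Gamma ((x+1)/2) * Real.Gamma ((1:ℝ)/2)
      = Real.Gamma (x/2+1) * ∫ t in (0:ℝ)..1, t ^ ((x-1)/2) * (1-t) ^ (-(1:ℝ)/2) := by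
    exact_mod_cast hbeta
  have hG2 : Real.Gamma (x/2+1) ≠ 0 := (Real.Gamma_pos_of_pos h2).ne'
  have hIoo : (∫ t in Set.Ioo (0:ℝ) 1, t ^ ((x-1)/2) * (1-t) ^ (-(1:ℝ)/2))
      = ∫ t in (0:ℝ)..1, t ^ ((x-1)/2) * (1-t) ^ (-(1:ℝ)/2) := by
    rw [intervalIntegral.integral_of_le (by norm_num : (0:ℝ) ≤ 1),
      MeasureTheory.integral_Ioc_eq_integral_Ioo]
  rw [hIoo, eq_div_iff hG2]
  linarith [hreal]

lemma ls_value {x : ℝ} (hx : |x| < 1) :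
    ∫ θ in Set.Ioc (0:ℝ) π, (2 * Real.sin (θ/2)) ^ x
      = π * Real.Gamma (1 + x) / (Real.Gamma (1 + x/2))^2 := by
  have hx1 : -1 < x := (abs_lt.mp hx).1
  have hstep : ∫ θ in Set.Ioc (0:ℝ) π, (2 * Real.sin (θ/2)) ^ x
      = ∫ θ in Set.Ioc (0:ℝ) π, 2 ^ x * Real.sin (θ/2) ^ x := by
    apply setIntegral_congr_fun measurableSet_Ioc
    intro θ hθ
    have hs : 0 < Real.sin (θ/2) := Real.sin_pos_of_pos_of_lt_pi (by linarith [hθ.1])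
      (by linarith [hθ.2, Real.pi_pos])
    exact Real.mul_rpow (by norm_num) hs.le
  rw [hstep, MeasureTheory.integral_const_mul, MeasureTheory.integral_Ioc_eq_integral_Ioo,
    ← ls_subst, ls_beta hx1]
  have hdup := Real.Gamma_mul_Gamma_add_half ((x+1)/2)
  rw [show (x+1)/2 + 1/2 = x/2 + 1 by ring, show 2*((x+1)/2) = 1 + x by ring,
    show 1 - (1 + x) = -x by ring] at hdup
  rw [Real.Gamma_one_half_eq, show 1 + x/2 = x/2 + 1 by ring]
  have hG2 : (0:ℝ) < Real.Gamma (x/2+1) := Real.Gamma_pos_of_pos (by linarith)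
  have h2x : (2:ℝ)^x * (2:ℝ)^(-x) = 1 := by
    rw [← Real.rpow_add two_pos]; simp
  have hπ : Real.sqrt π * Real.sqrt π = π := Real.mul_self_sqrt Real.pi_pos.le
  have hG1 : Real.Gamma ((x+1)/2) = Real.Gamma (1+x) * 2^(-x) * √π / Real.Gamma (x/2+1) := by
    rw [eq_div_iff hG2.ne']; linarith [hdup]
  rw [hG1]
  have hkey : 2^x * (Real.Gamma (1+x) * 2^(-x) * √π / Real.Gamma (x/2+1) * √π
        / Real.Gamma (x/2+1))
      = (2^x * 2^(-x)) * (√π * √π) * Real.Gamma (1+x) / Real.Gamma (x/2+1)^2 := by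
    ring
  rw [hkey, h2x, hπ, one_mul]

theorem ls_pi_generating_function (x : ℝ) (hx : |x| < 1) :
    -∑' m : ℕ, (-(∫ θ in (0:ℝ)..π, (Real.log (2 * Real.sin (θ/2)))^m)) * x^m / m.factorial
      = π * Real.Gamma (1 + x) / (Real.Gamma (1 + x/2))^2 := by
  have h1 : ∀ m : ℕ, (-(∫ θ in (0:ℝ)..π, (Real.log (2 * Real.sin (θ/2)))^m)) * x^m / m.factorial
      = -((∫ θ in Set.Ioc (0:ℝ) π, (Real.log (2 * Real.sin (θ/2)))^m) * x^m / m.factorial) := by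
    intro m
    rw [intervalIntegral.integral_of_le Real.pi_pos.le]
    ring
  rw [tsum_congr h1, tsum_neg, neg_neg, ← ls_interchange hx, ls_value hx]
end

section
/- For $x > -1$, $\int_0^\pi (2\sin(\theta/2))^x\,d\theta = \pi\,\frac{\Gamma(1+x)}{\Gamma(1+x/2)^2}$. -/
open Real

open MeasureTheory intervalIntegral Set in
lemma real_betaIntegral_aux {u v : ℝ} (hu : 0 < u) (hv : 0 < v) :
    ∫ t in (0:ℝ)..1, t ^ (u - 1) * (1 - t) ^ (v - 1)
      = Real.Gamma u * Real.Gamma v / Real.Gamma (u + v) := by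
  have h := Complex.Gamma_mul_Gamma_eq_betaIntegral
    (s := (u:ℂ)) (t := (v:ℂ)) (by simpa using hu) (by simpa using hv)
  have hbeta : Complex.betaIntegral (u:ℂ) (v:ℂ)
      = ((∫ t in (0:ℝ)..1, t ^ (u - 1) * (1 - t) ^ (v - 1) : ℝ) : ℂ) := by
    rw [Complex.betaIntegral, ← intervalIntegral.integral_ofReal]
    apply intervalIntegral.integral_congr
    intro t ht
    rw [uIcc_of_le zero_le_one] at ht
    dsimp only
    rw [Complex.ofReal_mul, Complex.ofReal_cpow ht.1,
      Complex.ofReal_cpow (by linarith [ht.2] : (0:ℝ) ≤ 1 - t)]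
    push_cast
    ring
  rw [hbeta, ← Complex.ofReal_add, Complex.Gamma_ofReal, Complex.Gamma_ofReal,
    Complex.Gamma_ofReal, ← Complex.ofReal_mul, ← Complex.ofReal_mul] at h
  have h' := Complex.ofReal_inj.mp h
  have hne : Real.Gamma (u + v) ≠ 0 := (Real.Gamma_pos_of_pos (by linarith)).ne'
  field_simp
  linarith [h']

theorem sin_power_integral (x : ℝ) (hx : -1 < x) :
    ∫ θ in (0:ℝ)..π, (2 * Real.sin (θ/2)) ^ x
      = π * Real.Gamma (1 + x) / (Real.Gamma (1 + x/2))^2 := by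
  have hπ := pi_pos
  set g : ℝ → ℝ := fun t => (2:ℝ)^x * (t ^ ((x-1)/2) * (1-t) ^ (-(1/2) : ℝ)) with hg
  set f : ℝ → ℝ := fun θ => Real.sin (θ/2) ^ 2 with hf
  set F : ℝ → ℝ := fun θ => Real.sin (θ/2) * Real.cos (θ/2) with hF
  have hderiv : ∀ θ ∈ Set.Ioo (0:ℝ) π, HasDerivWithinAt f (F θ) (Set.Ioo 0 π) θ := by
    intro θ _
    have h1 : HasDerivAt (fun θ : ℝ => Real.sin (θ/2)) (Real.cos (θ/2) * (1/2)) θ := by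
      simpa using (HasDerivAt.sin ((hasDerivAt_id θ).div_const 2))
    have h2 := h1.pow 2
    have : HasDerivAt f (F θ) θ := by
      have e : f = (fun θ : ℝ => Real.sin (θ/2)) ^ 2 := by ext; simp [hf]
      rw [e]
      refine h2.congr_deriv ?_
      show _ = Real.sin (θ/2) * Real.cos (θ/2)
      simp only [Nat.cast_ofNat, show (2:ℕ) - 1 = 1 from rfl, pow_one]
      ring
    exact this.hasDerivWithinAt
  have hmono : StrictMonoOn f (Set.Ioo (0:ℝ) π) := by
    intro a ha b hb hab
    have h1 : Real.sin (a/2) < Real.sin (b/2) := by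
      apply Real.strictMonoOn_sin ⟨by linarith [ha.1], by linarith [hb.2]⟩
        ⟨by linarith [hb.1], by linarith [hb.2]⟩ (by linarith)
    have h0 : 0 ≤ Real.sin (a/2) :=
      Real.sin_nonneg_of_nonneg_of_le_pi (by linarith [ha.1]) (by linarith [ha.2])
    simpa [hf] using pow_lt_pow_left₀ h1 h0 two_ne_zero
  have hinj : Set.InjOn f (Set.Ioo (0:ℝ) π) := hmono.injOn
  have himg : f '' Set.Ioo (0:ℝ) π = Set.Ioo (0:ℝ) 1 := by
    ext t
    constructor
    · rintro ⟨θ, hθ, rfl⟩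
      have hs : 0 < Real.sin (θ/2) :=
        Real.sin_pos_of_pos_of_lt_pi (by linarith [hθ.1]) (by linarith [hθ.2])
      have hs1 : Real.sin (θ/2) < 1 := by
        have h := Real.strictMonoOn_sin
          (⟨by linarith [hθ.1], by linarith [hθ.2]⟩ : θ/2 ∈ Set.Icc (-(π/2)) (π/2))
          (⟨by linarith, le_refl _⟩ : π/2 ∈ Set.Icc (-(π/2)) (π/2))
          (by linarith [hθ.2])
        simpa using h
      constructor
      · positivity
      · calc Real.sin (θ/2) ^ 2 < 1^2 := by
              exact pow_lt_pow_left₀ hs1 hs.le two_ne_zero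
          _ = 1 := one_pow 2
    · rintro ⟨h0, h1⟩
      refine ⟨2 * Real.arcsin (Real.sqrt t), ⟨?_, ?_⟩, ?_⟩
      · have : 0 < Real.arcsin (Real.sqrt t) := Real.arcsin_pos.mpr (Real.sqrt_pos.mpr h0)
        linarith
      · have : Real.arcsin (Real.sqrt t) < π/2 :=
          Real.arcsin_lt_pi_div_two.mpr (by
            rw [show (1:ℝ) = Real.sqrt 1 by simp]
            exact Real.sqrt_lt_sqrt h0.le h1)
        linarith
      · simp only [hf]
        rw [show (2 * Real.arcsin (Real.sqrt t)) / 2 = Real.arcsin (Real.sqrt t) by ring,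
          Real.sin_arcsin (by linarith [Real.sqrt_nonneg t]) (Real.sqrt_le_one.mpr h1.le),
          Real.sq_sqrt h0.le]
  have key : ∫ t in Set.Ioo (0:ℝ) 1, g t = ∫ θ in Set.Ioo (0:ℝ) π, |F θ| • g (f θ) := by
    rw [← himg]
    exact MeasureTheory.integral_image_eq_integral_abs_deriv_smul measurableSet_Ioo hderiv hinj g
  have hpt : ∀ θ ∈ Set.Ioo (0:ℝ) π, |F θ| • g (f θ) = (2 * Real.sin (θ/2)) ^ x := by
    intro θ hθ
    have hc : 0 < Real.sin (θ/2) :=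
      Real.sin_pos_of_pos_of_lt_pi (by linarith [hθ.1]) (by linarith [hθ.2])
    have hd : 0 < Real.cos (θ/2) :=
      Real.cos_pos_of_mem_Ioo ⟨by linarith [hθ.1], by linarith [hθ.2]⟩
    set c := Real.sin (θ/2) with hcdef
    set d := Real.cos (θ/2) with hddef
    have habs : |F θ| = c * d := abs_of_pos (mul_pos hc hd)
    have h1c : (1 : ℝ) - c^2 = d^2 := by
      have := Real.sin_sq_add_cos_sq (θ/2)
      rw [← hcdef, ← hddef] at this
      linarith
    have e1 : ((c^2 : ℝ)) ^ ((x-1)/2) = c ^ (x-1) := by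
      rw [← Real.rpow_natCast c 2, ← Real.rpow_mul hc.le]
      congr 1
      push_cast
      ring
    have e2 : ((d^2 : ℝ)) ^ (-(1/2) : ℝ) = d⁻¹ := by
      rw [← Real.rpow_natCast d 2, ← Real.rpow_mul hd.le]
      rw [show ((2:ℕ):ℝ) * (-(1/2)) = -1 by push_cast; ring, Real.rpow_neg_one]
    have e3 : c * c ^ (x - 1) = c ^ x := by
      rw [show c * c ^ (x-1) = c ^ (1:ℝ) * c ^ (x-1) by rw [Real.rpow_one],
        ← Real.rpow_add hc]
      ring_nf
    have e4 : (2 * c) ^ x = 2 ^ x * c ^ x := Real.mul_rpow (by norm_num) hc.le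
    simp only [hg, hf, smul_eq_mul, habs, ← hcdef, h1c, e1, e2, e4]
    field_simp
    rw [← e3]
  have hioc : ∫ θ in (0:ℝ)..π, (2 * Real.sin (θ/2)) ^ x
      = ∫ θ in Set.Ioo (0:ℝ) π, (2 * Real.sin (θ/2)) ^ x := by
    rw [intervalIntegral.integral_of_le hπ.le, MeasureTheory.integral_Ioc_eq_integral_Ioo]
  have hcongr : ∫ θ in Set.Ioo (0:ℝ) π, (2 * Real.sin (θ/2)) ^ x
      = ∫ θ in Set.Ioo (0:ℝ) π, |F θ| • g (f θ) :=
    MeasureTheory.setIntegral_congr_fun measurableSet_Ioo (fun θ hθ => (hpt θ hθ).symm)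
  have hioc2 : ∫ t in Set.Ioo (0:ℝ) 1, g t = ∫ t in (0:ℝ)..1, g t := by
    rw [intervalIntegral.integral_of_le zero_le_one, MeasureTheory.integral_Ioc_eq_integral_Ioo]
  have hbeta : ∫ t in (0:ℝ)..1, g t
      = 2 ^ x * (Real.Gamma ((x+1)/2) * Real.Gamma (1/2) / Real.Gamma ((x+1)/2 + 1/2)) := by
    rw [hg]
    rw [intervalIntegral.integral_const_mul]
    congr 1
    have := real_betaIntegral_aux (u := (x+1)/2) (v := 1/2) (by linarith) (by norm_num)
    rw [← this]
    congr 1 <;> ring_nf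
  rw [hioc, hcongr, ← key, hioc2, hbeta]
  -- final algebra with duplication formula
  have hdup := Real.Gamma_mul_Gamma_add_half ((x+1)/2)
  rw [show (1:ℝ) - 2 * ((x+1)/2) = -x by ring, show 2 * ((x+1)/2) = 1 + x by ring,
    show (x+1)/2 + 1/2 = 1 + x/2 by ring] at hdup
  rw [show (x+1)/2 + 1/2 = 1 + x/2 by ring, Real.Gamma_one_half_eq]
  have hw : Real.Gamma (1 + x/2) ≠ 0 := (Real.Gamma_pos_of_pos (by linarith)).ne'
  have h2 : (2:ℝ) ^ x * (2:ℝ) ^ (-x) = 1 := by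
    rw [← Real.rpow_add two_pos]; simp
  have hsq : Real.sqrt π * Real.sqrt π = π := Real.mul_self_sqrt hπ.le
  have h3 : (2:ℝ) ^ x * (2:ℝ) ^ (-x) * (Real.sqrt π * Real.sqrt π) = π := by
    rw [h2, one_mul, hsq]
  rw [← mul_div_assoc, div_eq_div_iff hw (pow_ne_zero 2 hw)]
  linear_combination (Real.sqrt π * (2:ℝ)^x * Real.Gamma (1 + x/2)) * hdup
    + (Real.Gamma (1+x) * Real.Gamma (1 + x/2)) * h3
end

section
/- For every nonnegative integer $n$, $\frac{(-1)^{n+1}}{n!}\,\mathrm{Ls}_{n+1}(\pi/3) = \sum_{k=0}^\infty \frac{2^{-4k}}{(2k+1)^{n+1}}\binom{2k}{k}$, where $\mathrm{Ls}_{n+1}(\pi/3) = -\int_0^{\pi/3}\log^n(2\sin(\theta/2))\,d\theta$. -/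
open Real

noncomputable def cb (k : ℕ) : ℝ := (Nat.centralBinom k : ℝ) / 4 ^ k

lemma cb_pos (k : ℕ) : 0 < cb k :=
  div_pos (by exact_mod_cast k.centralBinom_pos) (by positivity)

lemma cb_zero : cb 0 = 1 := by simp [cb, Nat.centralBinom_zero]

lemma cb_rec (k : ℕ) : (2*(k:ℝ)+2) * cb (k+1) = (2*k+1) * cb k := by
  have h := Nat.succ_mul_centralBinom_succ k
  have h' : ((k+1) * Nat.centralBinom (k+1) : ℝ) = 2 * (2*k+1) * Nat.centralBinom k := by
    exact_mod_cast congrArg (Nat.cast : ℕ → ℝ) h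
  have h4 : (4:ℝ)^(k+1) = 4 * 4^k := by ring
  simp only [cb, h4]
  linear_combination (1/(2*(4:ℝ)^k)) * h'

lemma cb_antitone (k : ℕ) : cb (k+1) ≤ cb k := by
  have h := cb_rec k
  nlinarith [cb_pos k, cb_pos (k+1)]

lemma cb_le_one (k : ℕ) : cb k ≤ 1 := by
  induction k with
  | zero => simp [cb_zero]
  | succ m ih => exact (cb_antitone m).trans ih

lemma summable_aux {r : ℝ} (h0 : 0 ≤ r) (h1 : r < 1) :
    Summable (fun k : ℕ => (k:ℝ) * r^(k-1)) := by
  rw [← summable_nat_add_iff 1]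
  have hs : Summable (fun k : ℕ => (k:ℝ)^1 * r^k + r^k) :=
    (summable_pow_mul_geometric_of_norm_lt_one 1
      (by rwa [Real.norm_eq_abs, abs_of_nonneg h0])).add
      (summable_geometric_of_lt_one h0 h1)
  refine hs.congr fun k => ?_
  push_cast
  ring_nf

lemma summable_cb_pow {t : ℝ} (ht : |t| < 1) :
    Summable (fun k : ℕ => cb k * t^k) := by
  refine Summable.of_norm (Summable.of_nonneg_of_le (fun k => norm_nonneg _)
    (fun k => ?_) (summable_geometric_of_lt_one (abs_nonneg t) ht))
  rw [norm_mul, norm_pow, Real.norm_eq_abs, Real.norm_eq_abs,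
    abs_of_pos (cb_pos k)]
  calc cb k * |t|^k ≤ 1 * |t|^k := by
        gcongr; exact cb_le_one k
    _ = |t|^k := one_mul _

lemma summable_cb_deriv {t : ℝ} (ht : |t| < 1) :
    Summable (fun k : ℕ => cb k * ((k:ℝ) * t^(k-1))) := by
  refine Summable.of_norm (Summable.of_nonneg_of_le (fun k => norm_nonneg _)
    (fun k => ?_) (summable_aux (abs_nonneg t) ht))
  rw [Real.norm_eq_abs, abs_mul, abs_mul, abs_of_pos (cb_pos k), abs_pow,
    Nat.abs_cast]
  calc cb k * ((k:ℝ) * |t|^(k-1)) ≤ 1 * ((k:ℝ) * |t|^(k-1)) := by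
        gcongr; exact cb_le_one k
    _ = (k:ℝ) * |t|^(k-1) := one_mul _

noncomputable def fcb (t : ℝ) : ℝ := ∑' k : ℕ, cb k * t^k

noncomputable def Dcb (t : ℝ) : ℝ := ∑' k : ℕ, cb k * ((k:ℝ) * t^(k-1))

lemma hasDerivAt_fcb {t : ℝ} (ht : |t| < 1) : HasDerivAt fcb (Dcb t) t := by
  set r : ℝ := (1 + |t|)/2 with hr
  have hr0 : 0 ≤ r := by positivity
  have hrlt : r < 1 := by rw [hr]; linarith
  have htr : |t| < r := by rw [hr]; linarith
  have ht' : t ∈ Set.Ioo (-r) r := abs_lt.mp htr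
  have h00 : (0:ℝ) ∈ Set.Ioo (-r) r :=
    Set.mem_Ioo.mpr ⟨by linarith [abs_nonneg t], by linarith [abs_nonneg t]⟩
  exact hasDerivAt_tsum_of_isPreconnected (summable_aux hr0 hrlt) isOpen_Ioo
    (convex_Ioo _ _).isPreconnected
    (fun k y _ => ((hasDerivAt_pow k y).const_mul (cb k)))
    (fun k y hy => by
      have hy' : |y| ≤ r := (abs_lt.mpr hy).le
      rw [Real.norm_eq_abs, abs_mul, abs_mul, abs_of_pos (cb_pos k), abs_pow,
        Nat.abs_cast]
      calc cb k * ((k:ℝ) * |y|^(k-1)) ≤ 1 * ((k:ℝ) * r^(k-1)) := by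
            gcongr <;> first | exact cb_le_one k | exact hy' | positivity
        _ = (k:ℝ) * r^(k-1) := one_mul _)
    h00
    (by
      apply summable_of_ne_finset_zero (s := ({0} : Finset ℕ))
      intro k hk
      have hk0 : k ≠ 0 := by simpa using hk
      simp [zero_pow hk0])
    ht'

lemma tD_eq (t : ℝ) :
    t * Dcb t = ∑' k : ℕ, (k:ℝ) * (cb k * t^k) := by
  rw [Dcb, ← tsum_mul_left]
  refine tsum_congr fun k => ?_
  rcases Nat.eq_zero_or_pos k with h | h
  · simp [h]
  · have : t * (cb k * ((k:ℝ) * t^(k-1))) = (k:ℝ) * (cb k * (t^(k-1) * t)) := by ring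
    rw [this, ← pow_succ, Nat.sub_add_cancel h]

lemma Dcb_shift {t : ℝ} (ht : |t| < 1) :
    Dcb t = ∑' k : ℕ, ((k:ℝ) + 1/2) * (cb k * t^k) := by
  have hs := summable_cb_deriv ht
  rw [Dcb, Summable.tsum_eq_zero_add hs]
  simp only [Nat.cast_zero, zero_mul, mul_zero, zero_add]
  refine tsum_congr fun k => ?_
  have hrec := cb_rec k
  have hk : (k + 1 - 1 : ℕ) = k := rfl
  rw [hk]
  push_cast
  linear_combination (t^k / 2) * hrec

lemma ode {t : ℝ} (ht : |t| < 1) : 2 * (1-t) * Dcb t = fcb t := by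
  have hs1 : Summable (fun k : ℕ => (k:ℝ) * (cb k * t^k)) := by
    refine Summable.of_norm (Summable.of_nonneg_of_le (fun k => norm_nonneg _)
      (fun k => ?_)
      ((summable_pow_mul_geometric_of_norm_lt_one 1
        (by rwa [Real.norm_eq_abs, abs_abs] : ‖|t|‖ < 1))))
    rw [Real.norm_eq_abs, abs_mul, abs_mul, abs_of_pos (cb_pos k), abs_pow, Nat.abs_cast]
    calc (k:ℝ) * (cb k * |t|^k) ≤ (k:ℝ) * (1 * |t|^k) := by
          gcongr; exact cb_le_one k
      _ ≤ (k:ℝ)^1 * |t|^k := by rw [pow_one, one_mul]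
  have hs2 : Summable (fun k : ℕ => (1/2 : ℝ) * (cb k * t^k)) :=
    (summable_cb_pow ht).mul_left _
  have key : Dcb t - t * Dcb t - fcb t / 2 = 0 := by
    have e2 := tD_eq t
    have e1 := Dcb_shift ht
    have e3 : ∑' k:ℕ, ((k:ℝ)+1/2) * (cb k * t^k)
        = (∑' k:ℕ, (k:ℝ)*(cb k * t^k)) + ∑' k:ℕ, (1/2:ℝ)*(cb k * t^k) := by
      rw [← Summable.tsum_add hs1 hs2]; exact tsum_congr fun k => by ring
    have e4 : ∑' k:ℕ, (1/2:ℝ)*(cb k * t^k) = fcb t / 2 := by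
      rw [tsum_mul_left, fcb]; ring
    rw [e2, e1, e3, e4]; ring
  linear_combination 2 * key

lemma fcb_zero : fcb 0 = 1 := by
  rw [fcb, tsum_eq_single 0 (fun k hk => by simp [zero_pow hk])]
  simp [cb_zero]

lemma fcb_sq {t : ℝ} (h0 : 0 ≤ t) (h1 : t < 1) : (fcb t)^2 * (1 - t) = 1 := by
  set g : ℝ → ℝ := fun s => (fcb s)^2 * (1 - s) with hg
  have hderiv : ∀ s ∈ Set.Ioo (-1 : ℝ) 1, HasDerivAt g 0 s := by
    intro s hs
    have habs : |s| < 1 := abs_lt.mpr ⟨hs.1, hs.2⟩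
    have h1' : HasDerivAt (fun s => (fcb s)^2) (2 * fcb s * Dcb s) s := by
      simpa using ((hasDerivAt_fcb habs).fun_pow 2)
    have h2' : HasDerivAt (fun s => (1 : ℝ) - s) (-1) s := by
      simpa using (hasDerivAt_id s).const_sub 1
    have hm := h1'.mul h2'
    refine hm.congr_deriv (Eq.symm ?_)
    have hode := ode habs
    linear_combination (-fcb s) * hode
  have hg0 : g 0 = 1 := by
    show (fcb 0)^2 * (1 - 0) = 1
    rw [fcb_zero]; norm_num
  rcases eq_or_lt_of_le h0 with rfl | hpos
  · exact hg0
  · have hcont : ContinuousOn g (Set.Icc 0 t) := by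
      intro s hs
      exact (hderiv s ⟨by linarith [hs.1], by linarith [hs.2]⟩).continuousAt.continuousWithinAt
    obtain ⟨c, _, hc⟩ := exists_hasDerivAt_eq_slope g (fun _ => 0) hpos hcont
      (fun s hs => hderiv s ⟨by linarith [hs.1], by linarith [hs.2]⟩)
    have h := hc.symm
    rw [div_eq_iff (by simpa using hpos.ne' : t - (0:ℝ) ≠ 0)] at h
    have hgt : g t = g 0 := by linarith
    calc (fcb t)^2 * (1-t) = g t := rfl
      _ = g 0 := hgt
      _ = 1 := hg0

lemma fcb_eq {t : ℝ} (h0 : 0 ≤ t) (h1 : t < 1) : fcb t = (Real.sqrt (1-t))⁻¹ := by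
  have hsq := fcb_sq h0 h1
  have hge : 1 ≤ fcb t := by
    have := Summable.le_tsum (summable_cb_pow (by rwa [abs_of_nonneg h0])) 0
      (fun j _ => mul_nonneg (cb_pos j).le (pow_nonneg h0 j))
    simpa [cb_zero, fcb] using this
  have h1t : (0:ℝ) < 1 - t := by linarith
  have hfs : fcb t = Real.sqrt ((fcb t)^2) := (Real.sqrt_sq (by linarith)).symm
  rw [hfs, show (fcb t)^2 = ((1-t)⁻¹ : ℝ) by field_simp; linarith [hsq],
    Real.sqrt_inv]

lemma inv_sqrt_eq_tsum {x : ℝ} (h0 : 0 ≤ x) (h1 : x ≤ 1) :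
    (Real.sqrt (1 - x^2/4))⁻¹ = ∑' k : ℕ, (Nat.centralBinom k : ℝ) / 16^k * x^(2*k) := by
  have ht0 : 0 ≤ x^2/4 := by positivity
  have ht1 : x^2/4 < 1 := by nlinarith
  rw [← fcb_eq ht0 ht1, fcb]
  refine tsum_congr fun k => ?_
  rw [cb, pow_mul, div_pow, show (16:ℝ)^k = 4^k * 4^k by rw [← mul_pow]; norm_num]
  field_simp

open MeasureTheory

lemma exp_neg_image : (fun t : ℝ => Real.exp (-t)) '' (Set.Ioi 0) = Set.Ioo 0 1 := by
  ext x
  constructor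
  · rintro ⟨t, ht, rfl⟩
    refine ⟨Real.exp_pos _, ?_⟩
    calc Real.exp (-t) < Real.exp 0 := Real.exp_lt_exp.mpr (by simpa using Set.mem_Ioi.mp ht)
      _ = 1 := Real.exp_zero
  · rintro ⟨hx0, hx1⟩
    exact ⟨-Real.log x, by simpa using Real.log_neg hx0 hx1, by simp [Real.exp_log hx0]⟩

lemma exp_neg_deriv : ∀ t ∈ Set.Ioi (0:ℝ),
    HasDerivWithinAt (fun t => Real.exp (-t)) (-Real.exp (-t)) (Set.Ioi 0) t := by
  intro t _
  have h := ((hasDerivAt_id t).neg).exp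
  simpa using h.hasDerivWithinAt

lemma exp_neg_inj : Set.InjOn (fun t : ℝ => Real.exp (-t)) (Set.Ioi 0) :=
  fun a _ b _ hab => neg_inj.mp (Real.exp_eq_exp.mp hab)

lemma cov2 (h : ℝ → ℝ) :
    (∫ x in Set.Ioo (0:ℝ) 1, h x)
      = ∫ t in Set.Ioi (0:ℝ), Real.exp (-t) * h (Real.exp (-t)) := by
  have key := integral_image_eq_integral_abs_deriv_smul measurableSet_Ioi
    exp_neg_deriv exp_neg_inj h
  rw [exp_neg_image] at key
  rw [key]
  refine setIntegral_congr_fun measurableSet_Ioi fun t _ => ?_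
  rw [smul_eq_mul, abs_neg, abs_of_pos (Real.exp_pos _)]

lemma cov2_int (h : ℝ → ℝ) :
    IntegrableOn h (Set.Ioo (0:ℝ) 1) ↔
      IntegrableOn (fun t => Real.exp (-t) * h (Real.exp (-t))) (Set.Ioi (0:ℝ)) := by
  have key := integrableOn_image_iff_integrableOn_abs_deriv_smul measurableSet_Ioi
    exp_neg_deriv exp_neg_inj h
  rw [exp_neg_image] at key
  rw [key]
  constructor <;> intro hh <;> refine hh.congr_fun (fun t _ => ?_) measurableSet_Ioi
  · dsimp only; rw [smul_eq_mul, abs_neg, abs_of_pos (Real.exp_pos _)]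
  · rw [smul_eq_mul, abs_neg, abs_of_pos (Real.exp_pos _)]

lemma gam (n : ℕ) {r : ℝ} (hr : 0 < r) :
    (∫ t in Set.Ioi (0:ℝ), t^n * Real.exp (-(r*t))) = n.factorial / r^(n+1) := by
  have h := Real.integral_rpow_mul_exp_neg_mul_Ioi (a := (n:ℝ)+1) (by positivity) hr
  rw [show (n:ℝ)+1-1 = (n:ℝ) by ring] at h
  rw [setIntegral_congr_fun measurableSet_Ioi
    (fun t _ => by rw [Real.rpow_natCast] : ∀ t ∈ Set.Ioi (0:ℝ),
      t ^ (n:ℝ) * Real.exp (-(r*t)) = t^n * Real.exp (-(r*t)))] at h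
  rw [h, Real.Gamma_nat_eq_factorial,
    show (n:ℝ)+1 = ((n+1:ℕ):ℝ) by push_cast; ring, Real.rpow_natCast]
  rw [one_div, inv_pow]
  ring

lemma gam_int (n : ℕ) {r : ℝ} (hr : 1 ≤ r) :
    IntegrableOn (fun t => t^n * Real.exp (-(r*t))) (Set.Ioi (0:ℝ)) := by
  have hG := Real.GammaIntegral_convergent (s := (n:ℝ)+1) (by positivity)
  refine MeasureTheory.Integrable.mono hG ?_ ?_
  · exact ((continuous_pow n).mul
      ((continuous_const.mul continuous_id).neg.rexp)).aestronglyMeasurable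
  · filter_upwards [self_mem_ae_restrict measurableSet_Ioi] with t ht
    have ht0 : (0:ℝ) < t := Set.mem_Ioi.mp ht
    rw [Real.norm_eq_abs, Real.norm_eq_abs, abs_mul, abs_mul, abs_pow, abs_of_pos ht0,
      abs_of_pos (Real.exp_pos _), abs_of_pos (Real.exp_pos _),
      show (n:ℝ)+1-1 = (n:ℝ) by ring, abs_of_pos (Real.rpow_pos_of_pos ht0 _),
      Real.rpow_natCast]
    rw [mul_comm (Real.exp (-t))]
    gcongr <;> nlinarith [pow_nonneg ht0.le n]

lemma exp_combine (k : ℕ) (t : ℝ) :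
    Real.exp (-t) * Real.exp (((2*k:ℕ):ℝ) * (-t)) = Real.exp (-((2*(k:ℝ)+1)*t)) := by
  rw [← Real.exp_add]; congr 1; push_cast; ring

lemma K_eq (n k : ℕ) :
    (∫ x in Set.Ioo (0:ℝ) 1, x^(2*k) * (Real.log x)^n)
      = (-1:ℝ)^n * n.factorial / (2*(k:ℝ)+1)^(n+1) := by
  have hr : (0:ℝ) < 2*(k:ℝ)+1 := by positivity
  rw [cov2]
  have hcongr : ∀ t ∈ Set.Ioi (0:ℝ),
      Real.exp (-t) * ((Real.exp (-t))^(2*k) * (Real.log (Real.exp (-t)))^n)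
        = (-1:ℝ)^n * (t^n * Real.exp (-((2*(k:ℝ)+1)*t))) := by
    intro t _
    rw [Real.log_exp, show (Real.exp (-t))^(2*k) = Real.exp (((2*k:ℕ):ℝ) * (-t)) from
      (Real.exp_nat_mul _ _).symm, neg_pow]
    linear_combination ((-1:ℝ)^n * t^n) * exp_combine k t
  rw [MeasureTheory.setIntegral_congr_fun measurableSet_Ioi hcongr,
    MeasureTheory.integral_const_mul, gam n hr]
  ring

lemma K_norm (n k : ℕ) :
    (∫ x in Set.Ioo (0:ℝ) 1, |x^(2*k) * (Real.log x)^n|)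
      = (n.factorial : ℝ) / (2*(k:ℝ)+1)^(n+1) := by
  have hr : (0:ℝ) < 2*(k:ℝ)+1 := by positivity
  rw [cov2]
  have hcongr : ∀ t ∈ Set.Ioi (0:ℝ),
      Real.exp (-t) * |(Real.exp (-t))^(2*k) * (Real.log (Real.exp (-t)))^n|
        = t^n * Real.exp (-((2*(k:ℝ)+1)*t)) := by
    intro t ht
    have ht0 : (0:ℝ) < t := Set.mem_Ioi.mp ht
    rw [Real.log_exp, abs_mul, abs_pow, abs_pow, abs_of_pos (Real.exp_pos _),
      abs_neg, abs_of_pos ht0, show (Real.exp (-t))^(2*k) = Real.exp (((2*k:ℕ):ℝ) * (-t)) from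
      (Real.exp_nat_mul _ _).symm]
    linear_combination (t^n) * exp_combine k t
  rw [MeasureTheory.setIntegral_congr_fun measurableSet_Ioi hcongr, gam n hr]

lemma K_int (n k : ℕ) :
    MeasureTheory.IntegrableOn (fun x => x^(2*k) * (Real.log x)^n) (Set.Ioo (0:ℝ) 1) := by
  rw [cov2_int]
  have hr1 : (1:ℝ) ≤ 2*(k:ℝ)+1 := by
    have := Nat.cast_nonneg (α := ℝ) k
    linarith
  refine MeasureTheory.IntegrableOn.congr_fun ((gam_int n hr1).const_mul ((-1:ℝ)^n))
    (fun t ht => ?_) measurableSet_Ioi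
  rw [Real.log_exp, show (Real.exp (-t))^(2*k) = Real.exp (((2*k:ℕ):ℝ) * (-t)) from
    (Real.exp_nat_mul _ _).symm, neg_pow]
  linear_combination (-(-1:ℝ)^n * t^n) * exp_combine k t

lemma sin_mem_aux {θ : ℝ} (hθ : θ ∈ Set.Ioo 0 (π/3)) :
    θ/2 ∈ Set.Icc (-(π/2)) (π/2) := by
  have hπ := Real.pi_pos
  obtain ⟨h1, h2⟩ := hθ
  constructor <;> nlinarith

lemma pi6_mem : π/6 ∈ Set.Icc (-(π/2)) (π/2) := by
  have hπ := Real.pi_pos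
  constructor <;> nlinarith

lemma sin_image : (fun θ : ℝ => 2 * Real.sin (θ/2)) '' (Set.Ioo 0 (π/3)) = Set.Ioo 0 1 := by
  have hπ := Real.pi_pos
  ext x
  constructor
  · rintro ⟨θ, hθ, rfl⟩
    obtain ⟨h1, h2⟩ := hθ
    constructor
    · have : 0 < Real.sin (θ/2) :=
        Real.sin_pos_of_pos_of_lt_pi (by linarith) (by nlinarith)
      linarith
    · have : Real.sin (θ/2) < Real.sin (π/6) :=
        Real.strictMonoOn_sin (sin_mem_aux ⟨h1, h2⟩) pi6_mem (by linarith)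
      rw [Real.sin_pi_div_six] at this
      linarith
  · rintro ⟨hx0, hx1⟩
    have hm : x/2 ∈ Set.Icc (-1:ℝ) 1 := ⟨by linarith, by linarith⟩
    have ha0 : 0 < Real.arcsin (x/2) := Real.arcsin_pos.mpr (by linarith)
    have ha1 : Real.arcsin (x/2) < π/6 := by
      rw [Real.arcsin_lt_iff_lt_sin hm pi6_mem, Real.sin_pi_div_six]
      linarith
    refine ⟨2 * Real.arcsin (x/2), ⟨by linarith, by linarith⟩, ?_⟩
    show 2 * Real.sin ((2 * Real.arcsin (x/2))/2) = x
    rw [show (2 * Real.arcsin (x/2))/2 = Real.arcsin (x/2) by ring,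
      Real.sin_arcsin (by linarith) (by linarith)]
    ring

lemma sin_inj : Set.InjOn (fun θ : ℝ => 2 * Real.sin (θ/2)) (Set.Ioo 0 (π/3)) := by
  intro a ha b hb hab
  have : Real.sin (a/2) = Real.sin (b/2) := by
    simpa using hab
  have := Real.injOn_sin (sin_mem_aux ha) (sin_mem_aux hb) this
  linarith

lemma sin_deriv : ∀ θ ∈ Set.Ioo 0 (π/3),
    HasDerivWithinAt (fun θ : ℝ => 2 * Real.sin (θ/2)) (Real.cos (θ/2))
      (Set.Ioo 0 (π/3)) θ := by
  intro θ _
  have h : HasDerivAt (fun θ : ℝ => 2 * Real.sin (θ/2)) (2 * (Real.cos (θ/2) * (1/2))) θ :=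
    (((hasDerivAt_id θ).div_const 2).sin).const_mul 2
  have h2 : (2 : ℝ) * (Real.cos (θ/2) * (1/2)) = Real.cos (θ/2) := by ring
  rw [h2] at h
  exact h.hasDerivWithinAt

lemma cov1 (n : ℕ) :
    (∫ x in Set.Ioo (0:ℝ) 1, (Real.log x)^n * (Real.sqrt (1 - x^2/4))⁻¹)
      = ∫ θ in Set.Ioo (0:ℝ) (π/3), (Real.log (2 * Real.sin (θ/2)))^n := by
  have hπ := Real.pi_pos
  have key := MeasureTheory.integral_image_eq_integral_abs_deriv_smul measurableSet_Ioo
    sin_deriv sin_inj (fun x => (Real.log x)^n * (Real.sqrt (1 - x^2/4))⁻¹)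
  rw [sin_image] at key
  rw [key]
  refine MeasureTheory.setIntegral_congr_fun measurableSet_Ioo fun θ hθ => ?_
  obtain ⟨h1, h2⟩ := hθ
  have hcos : 0 < Real.cos (θ/2) :=
    Real.cos_pos_of_mem_Ioo ⟨by nlinarith, by nlinarith⟩
  rw [smul_eq_mul, abs_of_pos hcos,
    show 1 - (2*Real.sin (θ/2))^2/4 = Real.cos (θ/2)^2 by rw [Real.cos_sq']; ring,
    Real.sqrt_sq hcos.le]
  field_simp

theorem ls_pi_over_3_hypergeometric (n : ℕ) :
    (-1:ℝ)^(n+1) / n.factorial *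
        (-(∫ θ in (0:ℝ)..(π/3), (Real.log (2 * Real.sin (θ/2)))^n))
      = ∑' k : ℕ, (2:ℝ)^(-(4:ℤ)*k) / (2*k+1)^(n+1) * (Nat.centralBinom k) := by
  have hπ := Real.pi_pos
  have hI : (∫ θ in (0:ℝ)..(π/3), (Real.log (2 * Real.sin (θ/2)))^n)
      = ∫ θ in Set.Ioo (0:ℝ) (π/3), (Real.log (2 * Real.sin (θ/2)))^n := by
    rw [intervalIntegral.integral_of_le (by linarith),
      MeasureTheory.integral_Ioc_eq_integral_Ioo]
  have hsum_eq : ∀ x ∈ Set.Ioo (0:ℝ) 1,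
      (Real.log x)^n * (Real.sqrt (1 - x^2/4))⁻¹
        = ∑' k : ℕ, (Nat.centralBinom k : ℝ)/16^k * (x^(2*k) * (Real.log x)^n) := by
    intro x hx
    rw [inv_sqrt_eq_tsum hx.1.le hx.2.le, ← tsum_mul_left]
    exact tsum_congr fun k => by ring
  have hFint : ∀ k : ℕ, MeasureTheory.Integrable
      (fun x => (Nat.centralBinom k : ℝ)/16^k * (x^(2*k) * (Real.log x)^n))
      (MeasureTheory.volume.restrict (Set.Ioo (0:ℝ) 1)) :=
    fun k => (K_int n k).const_mul _
  have hCB : ∀ k : ℕ, (Nat.centralBinom k : ℝ)/16^k ≤ (1/4:ℝ)^k := by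
    intro k
    have h1 := cb_le_one k
    rw [cb, div_le_one (by positivity)] at h1
    have h16 : (16:ℝ)^k = 4^k * 4^k := by rw [← mul_pow]; norm_num
    rw [div_pow, one_pow, h16, div_le_div_iff₀ (by positivity) (by positivity)]
    nlinarith [pow_pos (show (0:ℝ) < 4 by norm_num) k]
  have hnorm : ∀ k : ℕ, (∫ x in Set.Ioo (0:ℝ) 1,
      ‖(Nat.centralBinom k : ℝ)/16^k * (x^(2*k) * (Real.log x)^n)‖)
      = (Nat.centralBinom k : ℝ)/16^k * ((n.factorial:ℝ)/(2*(k:ℝ)+1)^(n+1)) := by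
    intro k
    have habs : ∀ x : ℝ, ‖(Nat.centralBinom k : ℝ)/16^k * (x^(2*k) * (Real.log x)^n)‖
        = (Nat.centralBinom k : ℝ)/16^k * |x^(2*k) * (Real.log x)^n| := by
      intro x; rw [Real.norm_eq_abs, abs_mul, abs_of_nonneg (by positivity)]
    simp_rw [habs]
    rw [MeasureTheory.integral_const_mul, K_norm n k]
  have hFsum : Summable (fun k : ℕ => ∫ x in Set.Ioo (0:ℝ) 1,
      ‖(Nat.centralBinom k : ℝ)/16^k * (x^(2*k) * (Real.log x)^n)‖) := by
    refine Summable.of_nonneg_of_le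
      (fun k => MeasureTheory.integral_nonneg fun x => norm_nonneg _)
      (fun k => ?_)
      ((summable_geometric_of_lt_one (by norm_num) (by norm_num : (1/4:ℝ) < 1)).mul_right
        (n.factorial:ℝ))
    rw [hnorm k]
    have hd : (n.factorial:ℝ)/(2*(k:ℝ)+1)^(n+1) ≤ (n.factorial:ℝ) := by
      apply div_le_self (Nat.cast_nonneg _)
      apply one_le_pow₀
      have := Nat.cast_nonneg (α := ℝ) k
      linarith
    calc (Nat.centralBinom k : ℝ)/16^k * ((n.factorial:ℝ)/(2*(k:ℝ)+1)^(n+1))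
        ≤ (1/4:ℝ)^k * (n.factorial:ℝ) := by
          apply mul_le_mul (hCB k) hd (by positivity) (by positivity)
      _ = (1/4:ℝ)^k * (n.factorial:ℝ) := rfl
  have hswap := MeasureTheory.integral_tsum_of_summable_integral_norm hFint hFsum
  have hIoo : (∫ θ in Set.Ioo (0:ℝ) (π/3), (Real.log (2 * Real.sin (θ/2)))^n)
      = ∑' k:ℕ, (Nat.centralBinom k:ℝ)/16^k *
          ((-1:ℝ)^n * n.factorial / (2*(k:ℝ)+1)^(n+1)) := by
    rw [← cov1 n, MeasureTheory.setIntegral_congr_fun measurableSet_Ioo hsum_eq, ← hswap]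
    exact tsum_congr fun k => by rw [MeasureTheory.integral_const_mul, K_eq n k]
  rw [hI, hIoo, ← tsum_neg, ← tsum_mul_left]
  refine tsum_congr fun k => ?_
  have h2 : (2:ℝ)^(-(4:ℤ)*(k:ℤ)) = ((16:ℝ)^k)⁻¹ := by
    rw [show (-(4:ℤ)*(k:ℤ)) = -((4*k : ℕ):ℤ) by push_cast; ring, zpow_neg, zpow_natCast,
      pow_mul]
    norm_num
  rw [h2]
  have hsgn : (-1:ℝ)^(n+1) * (-1:ℝ)^n = -1 := by
    rw [← pow_add]
    exact Odd.neg_one_pow ⟨n, by ring⟩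
  have hfac : (n.factorial : ℝ) ≠ 0 := Nat.cast_ne_zero.mpr n.factorial_ne_zero
  have hpow : ((2*(k:ℝ)+1)^(n+1)) ≠ 0 := by positivity
  have h16 : ((16:ℝ)^k) ≠ 0 := by positivity
  field_simp
  ring_nf
  rw [show ((-1:ℝ))^(n*2) = 1 by rw [pow_mul']; norm_num]
  ring
end

section
/- $\int_0^\pi \theta \log(2\sin(\theta/2))\,d\theta = \frac{7}{4}\zeta(3)$. -/
open Real
open MeasureTheory intervalIntegral Filter Topology

lemma integral_theta_cos (n : ℕ) :
    ∫ θ in (0:ℝ)..π, θ * Real.cos ((n+1) * θ)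
      = ((-1)^(n+1) - 1) / ((n:ℝ)+1)^2 := by
  have hc : ((n:ℝ)+1) ≠ 0 := by positivity
  have key : ∀ θ : ℝ, HasDerivAt (fun θ : ℝ =>
      θ * Real.sin (((n:ℝ)+1) * θ) / ((n:ℝ)+1) + Real.cos (((n:ℝ)+1)*θ) / ((n:ℝ)+1)^2)
      (θ * Real.cos (((n:ℝ)+1) * θ)) θ := by
    intro θ
    have h1 : HasDerivAt (fun θ : ℝ => ((n:ℝ)+1) * θ) ((n:ℝ)+1) θ := by
      simpa using (hasDerivAt_id θ).const_mul ((n:ℝ)+1)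
    have hs : HasDerivAt (fun θ : ℝ => Real.sin (((n:ℝ)+1) * θ))
        (Real.cos (((n:ℝ)+1)*θ) * ((n:ℝ)+1)) θ := (Real.hasDerivAt_sin _).comp θ h1
    have hcos : HasDerivAt (fun θ : ℝ => Real.cos (((n:ℝ)+1) * θ))
        (-Real.sin (((n:ℝ)+1)*θ) * ((n:ℝ)+1)) θ := (Real.hasDerivAt_cos _).comp θ h1
    have := (((hasDerivAt_id θ).mul hs).div_const ((n:ℝ)+1)).add (hcos.div_const (((n:ℝ)+1)^2))
    refine this.congr_deriv ?_
    simp only [id_eq]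
    field_simp
    ring
  have := intervalIntegral.integral_eq_sub_of_hasDerivAt (a := (0:ℝ)) (b := π) (f := fun θ : ℝ =>
      θ * Real.sin (((n:ℝ)+1) * θ) / ((n:ℝ)+1) + Real.cos (((n:ℝ)+1)*θ) / ((n:ℝ)+1)^2)
      (fun θ _ => key θ) (by apply Continuous.intervalIntegrable; continuity)
  rw [this]
  have h1 : Real.sin (((n:ℝ)+1) * π) = 0 := by
    have : ((n:ℝ)+1) * π = (n+1 : ℤ) * π := by push_cast; ring
    rw [this, Real.sin_int_mul_pi]
  have h2 : Real.cos (((n:ℝ)+1) * π) = (-1)^(n+1) := by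
    have : ((n:ℝ)+1) * π = π + n * π := by ring
    rw [this, Real.cos_add_nat_mul_pi, Real.cos_pi]
    rw [pow_succ]
  simp [h1, h2]
  field_simp

lemma hasSum_log_abs (r θ : ℝ) (hr0 : 0 ≤ r) (hr1 : r < 1) :
    HasSum (fun n : ℕ => -(r^(n+1) * Real.cos (((n:ℝ)+1) * θ) / ((n:ℝ)+1)))
      (Real.log (‖(1 - (r:ℂ) * Complex.exp ((θ:ℝ) * Complex.I))‖)) := by
  set z : ℂ := (r:ℂ) * Complex.exp ((θ:ℝ) * Complex.I) with hzdef
  have hz : ‖z‖ < 1 := by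
    simp only [hzdef, norm_mul, Complex.norm_real, Real.norm_eq_abs,
      Complex.norm_exp_ofReal_mul_I, mul_one, abs_of_nonneg hr0]
    exact hr1
  have hzm : ∀ m : ℕ, (z ^ m / m).re = r^m * Real.cos (m*θ) / m := by
    intro m
    have h1 : z ^ m = ((r^m : ℝ) : ℂ) * Complex.exp ((↑(m*θ:ℝ)) * Complex.I) := by
      rw [hzdef, mul_pow, ← Complex.exp_nat_mul]
      push_cast
      ring_nf
    rw [h1, show (((r^m:ℝ)):ℂ) * Complex.exp (↑(m*θ:ℝ) * Complex.I) / (m:ℂ)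
        = ((r^m/m : ℝ):ℂ) * Complex.exp (↑(m*θ:ℝ) * Complex.I) by push_cast; ring]
    rw [Complex.re_ofReal_mul, Complex.exp_ofReal_mul_I_re]
    push_cast; ring
  have H : HasSum (fun n : ℕ => -((z^n/n : ℂ).re)) (Real.log (‖(1-z)‖)) := by
    have := (Complex.hasSum_re (Complex.hasSum_taylorSeries_neg_log hz)).neg
    simpa [Complex.neg_re, Complex.log_re] using this
  have H1 : HasSum (fun n : ℕ => -((z^(n+1)/((n+1:ℕ):ℂ) : ℂ).re))
      (Real.log (‖(1-z)‖)) := by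
    refine (hasSum_nat_add_iff (f := fun n : ℕ => -((z^n/n : ℂ).re)) 1).mpr ?_
    simpa using H
  convert H1 using 2 with n
  rw [hzm (n+1)]
  push_cast
  ring

lemma hasSum_integral_r (r : ℝ) (hr0 : 0 ≤ r) (hr1 : r < 1) :
    HasSum (fun n : ℕ => -(r^(n+1) * (((-1:ℝ)^(n+1) - 1) / ((n:ℝ)+1)^2) / ((n:ℝ)+1)))
      (∫ θ in (0:ℝ)..π,
        θ * Real.log (‖(1 - (r:ℂ) * Complex.exp ((θ:ℝ) * Complex.I))‖)) := by
  have hgeo : Summable fun n : ℕ => π * (r^(n+1)/((n:ℝ)+1)) := by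
    apply Summable.mul_left
    refine Summable.of_nonneg_of_le (fun n => by positivity)
      (f := fun n : ℕ => r^(n+1)) (fun n => ?_) ?_
    · rw [div_le_iff₀ (by positivity)]
      nth_rewrite 1 [← mul_one (r^(n+1))]
      gcongr
      simp
    · have := (summable_geometric_of_lt_one hr0 hr1).mul_left r
      simpa [pow_succ, mul_comm] using this
  have key := intervalIntegral.hasSum_integral_of_dominated_convergence
    (μ := MeasureTheory.volume) (a := (0:ℝ)) (b := π)
    (F := fun (n : ℕ) (t : ℝ) => t * -(r^(n+1) * Real.cos (((n:ℝ)+1) * t) / ((n:ℝ)+1)))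
    (f := fun t : ℝ => t * Real.log (‖(1 - (r:ℂ) * Complex.exp ((t:ℝ) * Complex.I))‖))
    (bound := fun (n : ℕ) (_ : ℝ) => π * (r^(n+1)/((n:ℝ)+1)))
    (fun n => (Continuous.aestronglyMeasurable (by continuity)))
    (fun n => by
      filter_upwards with t ht
      rw [Set.uIoc_of_le Real.pi_pos.le] at ht
      have h1 : |Real.cos (((n:ℝ)+1)*t)| ≤ 1 := Real.abs_cos_le_one _
      have h2 : |t| ≤ π := by rw [abs_of_pos ht.1]; exact ht.2
      have hn : |((n:ℝ)+1)| = (n:ℝ)+1 := abs_of_pos (by positivity)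
      calc ‖t * -(r ^ (n + 1) * Real.cos (((n:ℝ) + 1) * t) / ((n:ℝ) + 1))‖
          = |t| * (r^(n+1) * |Real.cos (((n:ℝ)+1)*t)| / ((n:ℝ)+1)) := by
            rw [Real.norm_eq_abs, abs_mul, abs_neg, abs_div, abs_mul, abs_pow,
              abs_of_nonneg hr0, hn]
        _ ≤ π * (r^(n+1) * 1 / ((n:ℝ)+1)) := by gcongr
        _ = π * (r^(n+1)/((n:ℝ)+1)) := by ring)
    (by filter_upwards with t ht; exact hgeo)
    (by apply continuous_const.intervalIntegrable)
    (by
      filter_upwards with t ht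
      exact (hasSum_log_abs r t hr0 hr1).mul_left t)
  convert key using 2 with n
  · rfl
  simp_rw [show ∀ t:ℝ, t * -(r^(n+1) * Real.cos (((n:ℝ)+1) * t) / ((n:ℝ)+1))
      = (-(r^(n+1)/((n:ℝ)+1))) * (t * Real.cos (((n:ℝ)+1)*t)) from fun t => by ring,
    intervalIntegral.integral_const_mul, integral_theta_cos n]
  ring

lemma abs_one_sub_exp (θ : ℝ) (h0 : 0 ≤ θ) (hπ : θ ≤ π) :
    ‖(1 - Complex.exp ((θ:ℝ) * Complex.I))‖ = 2 * Real.sin (θ/2) := by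
  have hsin : 0 ≤ Real.sin (θ/2) :=
    Real.sin_nonneg_of_nonneg_of_le_pi (by linarith) (by linarith [Real.pi_pos])
  have h1 : (‖(1 - Complex.exp ((θ:ℝ) * Complex.I))‖)^2 = 2 - 2*Real.cos θ := by
    rw [Complex.sq_norm, Complex.normSq_apply, Complex.sub_re, Complex.sub_im,
      Complex.one_re, Complex.one_im, Complex.exp_ofReal_mul_I_re, Complex.exp_ofReal_mul_I_im]
    have := Real.sin_sq_add_cos_sq θ
    nlinarith
  have h2 : (2 * Real.sin (θ/2))^2 = 2 - 2*Real.cos θ := by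
    have ha := Real.cos_two_mul (θ/2)
    have hb := Real.sin_sq_add_cos_sq (θ/2)
    rw [show 2*(θ/2) = θ by ring] at ha
    nlinarith
  calc ‖(1 - Complex.exp ((θ:ℝ) * Complex.I))‖
      = Real.sqrt ((‖(1 - Complex.exp ((θ:ℝ) * Complex.I))‖)^2) :=
        (Real.sqrt_sq (norm_nonneg _)).symm
    _ = Real.sqrt ((2 * Real.sin (θ/2))^2) := by rw [h1, h2]
    _ = 2 * Real.sin (θ/2) := Real.sqrt_sq (by positivity)

lemma abs_lower (r θ : ℝ) (hr : 1/2 ≤ r) (hr1 : r ≤ 1) (h0 : 0 < θ) (hπ : θ ≤ π) :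
    θ / π ≤ ‖(1 - (r:ℂ) * Complex.exp ((θ:ℝ) * Complex.I))‖ := by
  have hπpos := Real.pi_pos
  have hs : θ / π ≤ Real.sin (θ/2) := by
    have := Real.mul_le_sin (x := θ/2) (by linarith) (by linarith)
    calc θ / π = 2/π * (θ/2) := by field_simp
      _ ≤ Real.sin (θ/2) := this
  have hsin : 0 ≤ Real.sin (θ/2) := le_trans (by positivity) hs
  set A := ‖(1 - (r:ℂ) * Complex.exp ((θ:ℝ) * Complex.I))‖ with hA
  have hA0 : 0 ≤ A := norm_nonneg _
  have h1 : A^2 = 1 - 2*r*Real.cos θ + r^2 := by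
    rw [hA, Complex.sq_norm, Complex.normSq_apply, Complex.sub_re, Complex.sub_im,
      Complex.one_re, Complex.one_im]
    have hre : ((r:ℂ) * Complex.exp ((θ:ℝ) * Complex.I)).re = r * Real.cos θ := by
      rw [Complex.re_ofReal_mul, Complex.exp_ofReal_mul_I_re]
    have him : ((r:ℂ) * Complex.exp ((θ:ℝ) * Complex.I)).im = r * Real.sin θ := by
      rw [Complex.im_ofReal_mul, Complex.exp_ofReal_mul_I_im]
    rw [hre, him]
    have := Real.sin_sq_add_cos_sq θ
    nlinarith
  have hcos : Real.cos θ = 1 - 2 * Real.sin (θ/2)^2 := by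
    have ha := Real.cos_two_mul (θ/2)
    have hb := Real.sin_sq_add_cos_sq (θ/2)
    rw [show 2*(θ/2) = θ by ring] at ha
    nlinarith
  have hsq : (θ/π)^2 ≤ A^2 := by
    rw [h1, hcos]
    nlinarith [sq_nonneg (1 - r), hs, hsin, div_nonneg h0.le hπpos.le]
  nlinarith [div_nonneg h0.le hπpos.le]

lemma tendsto_integral_log :
    Filter.Tendsto (fun r : ℝ => ∫ θ in (0:ℝ)..π,
        θ * Real.log (‖(1 - (r:ℂ) * Complex.exp ((θ:ℝ) * Complex.I))‖))
      (nhdsWithin 1 (Set.Iio 1))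
      (𝓝 (∫ θ in (0:ℝ)..π, θ * Real.log (2 * Real.sin (θ/2)))) := by
  have hπ := Real.pi_pos
  apply intervalIntegral.tendsto_integral_filter_of_dominated_convergence
    (bound := fun t => t * (Real.log 2 + Real.log π) - t * Real.log t)
  · filter_upwards with r
    apply Measurable.aestronglyMeasurable
    exact measurable_id'.mul (Real.measurable_log.comp (Continuous.measurable (by continuity)))
  · filter_upwards [Ioo_mem_nhdsLT_of_mem (show (1:ℝ) ∈ Set.Ioc (1/2) 1 by norm_num)]
      with r hr
    filter_upwards with t ht
    rw [Set.uIoc_of_le hπ.le] at ht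
    obtain ⟨ht0, htπ⟩ := ht
    set A := ‖(1 - (r:ℂ) * Complex.exp ((t:ℝ) * Complex.I))‖ with hA
    have hlow : t/π ≤ A := abs_lower r t hr.1.le hr.2.le ht0 htπ
    have hA0 : 0 < A := lt_of_lt_of_le (by positivity) hlow
    have hup : A ≤ 2 := by
      have : A ≤ ‖(1:ℂ)‖ + ‖(r:ℂ) * Complex.exp ((t:ℝ) * Complex.I)‖ := by
        rw [hA]
        exact norm_sub_le _ _
      simp only [norm_one, norm_mul, Complex.norm_real, Real.norm_eq_abs,
        Complex.norm_exp_ofReal_mul_I, mul_one] at this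
      rw [abs_of_nonneg (by linarith [hr.1] : (0:ℝ) ≤ r)] at this
      linarith [hr.2]
    have hlogup : Real.log A ≤ Real.log 2 := Real.log_le_log hA0 hup
    have hloglow : Real.log t - Real.log π ≤ Real.log A := by
      have := Real.log_le_log (by positivity) hlow
      rwa [Real.log_div (ne_of_gt ht0) (ne_of_gt hπ)] at this
    have hlogt : Real.log t ≤ Real.log π := Real.log_le_log ht0 htπ
    have hlog2 : 0 ≤ Real.log 2 := Real.log_nonneg one_le_two
    rw [Real.norm_eq_abs, abs_mul, abs_of_pos ht0]
    have habs : |Real.log A| ≤ Real.log 2 + Real.log π - Real.log t :=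
      abs_le.mpr ⟨by linarith, by linarith⟩
    calc t * |Real.log A| ≤ t * (Real.log 2 + Real.log π - Real.log t) := by
          exact mul_le_mul_of_nonneg_left habs ht0.le
      _ = t * (Real.log 2 + Real.log π) - t * Real.log t := by ring
  · apply Continuous.intervalIntegrable
    exact (continuous_id.mul continuous_const).sub Real.continuous_mul_log
  · filter_upwards with t ht
    rw [Set.uIoc_of_le hπ.le] at ht
    obtain ⟨ht0, htπ⟩ := ht
    have hsin : 0 < Real.sin (t/2) :=
      Real.sin_pos_of_pos_of_lt_pi (by linarith) (by linarith)
    have habs1 : ‖(1 - Complex.exp ((t:ℝ) * Complex.I))‖ = 2 * Real.sin (t/2) :=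
      abs_one_sub_exp t ht0.le htπ
    have hne : ‖(1 - Complex.exp ((t:ℝ) * Complex.I))‖ ≠ 0 := by
      rw [habs1]; positivity
    have hcont : ContinuousAt (fun r : ℝ =>
        t * Real.log (‖(1 - (r:ℂ) * Complex.exp ((t:ℝ) * Complex.I))‖)) 1 := by
      apply continuousAt_const.mul
      have hin : ContinuousAt (fun r : ℝ =>
          ‖(1 - (r:ℂ) * Complex.exp ((t:ℝ) * Complex.I))‖) 1 :=
        Continuous.continuousAt (by continuity)
      exact ContinuousAt.comp (Real.continuousAt_log (by simpa using hne)) hin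
    have := hcont.tendsto.mono_left (nhdsWithin_le_nhds (s := Set.Iio (1:ℝ)))
    simpa [habs1] using this

lemma summable_cube : Summable (fun n : ℕ => 1/((n:ℝ)+1)^3) := by
  have h : Summable (fun n : ℕ => 1/((n:ℝ))^3) :=
    Real.summable_one_div_nat_pow.mpr (by norm_num)
  have := (summable_nat_add_iff 1).mpr h
  convert this using 2 with n
  · rfl
  push_cast
  ring

set_option maxHeartbeats 1000000 in
lemma tendsto_S :
    Filter.Tendsto (fun r : ℝ =>
        ∑' n : ℕ, -(r^(n+1) * (((-1:ℝ)^(n+1) - 1) / ((n:ℝ)+1)^2) / ((n:ℝ)+1)))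
      (nhdsWithin 1 (Set.Iio 1))
      (𝓝 (∑' n : ℕ, (1-(-1:ℝ)^(n+1)) / ((n:ℝ)+1)^3)) := by
  have hsummable : Summable (fun n : ℕ => 2/((n:ℝ)+1)^3) := by
    simpa [div_eq_mul_inv] using summable_cube.mul_left 2
  refine tendsto_tsum_of_dominated_convergence
    (f := fun (r:ℝ) (n:ℕ) => -(r^(n+1) * (((-1:ℝ)^(n+1) - 1) / ((n:ℝ)+1)^2) / ((n:ℝ)+1)))
    (g := fun n : ℕ => (1-(-1:ℝ)^(n+1)) / ((n:ℝ)+1)^3) hsummable ?_ ?_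
  · intro k
    have hcont : ContinuousAt (fun r : ℝ =>
        -(r^(k+1) * (((-1:ℝ)^(k+1) - 1) / ((k:ℝ)+1)^2) / ((k:ℝ)+1))) 1 := by
      apply Continuous.continuousAt
      continuity
    have := hcont.tendsto.mono_left (nhdsWithin_le_nhds (s := Set.Iio (1:ℝ)))
    convert this using 2
    have hk : ((k:ℝ)+1) ≠ 0 := by positivity
    field_simp
    ring
  · filter_upwards [Ioo_mem_nhdsLT_of_mem (show (1:ℝ) ∈ Set.Ioc 0 1 by norm_num)]
      with r hr
    intro k
    have hr0 : (0:ℝ) ≤ r := hr.1.le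
    have hr1 : r ≤ 1 := hr.2.le
    have hk : (0:ℝ) < (k:ℝ)+1 := by positivity
    have habs : |(-1:ℝ)^(k+1) - 1| ≤ 2 := by
      rcases Nat.even_or_odd (k+1) with h | h
      · rw [h.neg_one_pow]; norm_num
      · rw [h.neg_one_pow]; norm_num
    rw [Real.norm_eq_abs, abs_neg, abs_div, abs_mul, abs_div, abs_pow, abs_pow,
      abs_of_nonneg hr0, abs_of_pos hk]
    calc r ^ (k + 1) * (|(-1:ℝ) ^ (k + 1) - 1| / ((k:ℝ) + 1) ^ 2) / ((k:ℝ) + 1)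
        ≤ 1^(k+1) * (2 / ((k:ℝ)+1)^2) / ((k:ℝ)+1) := by gcongr
      _ = 2/((k:ℝ)+1)^3 := by
          have hk' : ((k:ℝ)+1) ≠ 0 := ne_of_gt hk
          field_simp
          ring

lemma T_eq : ∑' n : ℕ, (1-(-1:ℝ)^(n+1)) / ((n:ℝ)+1)^3
    = 7/4 * ∑' n : ℕ, 1/((n:ℝ)+1)^3 := by
  set g : ℕ → ℝ := fun n => 1/((n:ℝ)+1)^3 with hg
  set f : ℕ → ℝ := fun n => (1-(-1:ℝ)^(n+1)) / ((n:ℝ)+1)^3 with hf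
  have hfe : ∀ k : ℕ, f (2*k) = 2 * (1/((2*(k:ℝ))+1)^3) := by
    intro k
    have : ((-1:ℝ))^(2*k+1) = -1 := Odd.neg_one_pow ⟨k, by ring⟩
    simp only [hf, this]
    push_cast
    norm_num
    rw [div_eq_mul_inv]
  have hfo : ∀ k : ℕ, f (2*k+1) = 0 := by
    intro k
    have : ((-1:ℝ))^(2*k+1+1) = 1 := Even.neg_one_pow ⟨k+1, by ring⟩
    simp only [hf, this]
    norm_num
  have hge : ∀ k : ℕ, g (2*k) = 1/((2*(k:ℝ))+1)^3 := by
    intro k; simp only [hg]; push_cast; ring_nf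
  have hgo : ∀ k : ℕ, g (2*k+1) = (1/8) * (1/((k:ℝ)+1)^3) := by
    intro k
    simp only [hg]
    have h1 : ((2*k+1:ℕ):ℝ) + 1 = 2*((k:ℝ)+1) := by push_cast; ring
    rw [h1]
    have : (2*((k:ℝ)+1))^3 = 8 * ((k:ℝ)+1)^3 := by ring
    rw [this]
    have hk : ((k:ℝ)+1)^3 ≠ 0 := by positivity
    field_simp
    try ring
  have hOsum : Summable (fun k : ℕ => 1/((2*(k:ℝ))+1)^3) := by
    apply Summable.of_nonneg_of_le (fun k => by positivity) (fun k => ?_) summable_cube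
    apply one_div_le_one_div_of_le (by positivity)
    have hk : (0:ℝ) ≤ k := Nat.cast_nonneg k
    gcongr <;> nlinarith
  have hsum_fe : Summable (fun k : ℕ => f (2*k)) := by
    apply Summable.congr (hOsum.mul_left 2)
    intro k; rw [hfe]
  have hsum_fo : Summable (fun k : ℕ => f (2*k+1)) := by
    apply Summable.congr summable_zero
    intro k; rw [hfo]
  have hsum_ge : Summable (fun k : ℕ => g (2*k)) := by
    apply Summable.congr hOsum
    intro k; rw [hge]
  have hsum_go : Summable (fun k : ℕ => g (2*k+1)) := by
    apply Summable.congr (summable_cube.mul_left (1/8))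
    intro k; rw [hgo]
  have h1 := tsum_even_add_odd hsum_fe hsum_fo
  have h2 := tsum_even_add_odd hsum_ge hsum_go
  have e1 : ∑' k : ℕ, f (2*k) = 2 * ∑' k : ℕ, 1/((2*(k:ℝ))+1)^3 := by
    rw [tsum_congr hfe, tsum_mul_left]
  have e2 : ∑' k : ℕ, f (2*k+1) = 0 := by
    rw [tsum_congr hfo, tsum_zero]
  have e3 : ∑' k : ℕ, g (2*k) = ∑' k : ℕ, 1/((2*(k:ℝ))+1)^3 := tsum_congr hge
  have e4 : ∑' k : ℕ, g (2*k+1) = (1/8) * ∑' n : ℕ, 1/((n:ℝ)+1)^3 := by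
    rw [tsum_congr hgo, tsum_mul_left]
  rw [e1, e2] at h1
  rw [e3, e4] at h2
  linarith

lemma zeta3 : riemannZeta 3 = ((∑' n : ℕ, 1/((n:ℝ)+1)^3 : ℝ) : ℂ) := by
  rw [zeta_eq_tsum_one_div_nat_add_one_cpow (by norm_num : 1 < (3:ℂ).re)]
  rw [Complex.ofReal_tsum]
  congr 1
  funext n
  rw [show (3:ℂ) = ((3:ℕ):ℂ) by norm_num, Complex.cpow_natCast]
  push_cast
  ring

theorem ls3_1_pi :
    ((∫ θ in (0:ℝ)..π, θ * Real.log (2 * Real.sin (θ/2)) : ℝ) : ℂ)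
      = 7/4 * riemannZeta 3 := by
  have hI : (∫ θ in (0:ℝ)..π, θ * Real.log (2 * Real.sin (θ/2)))
      = ∑' n : ℕ, (1-(-1:ℝ)^(n+1)) / ((n:ℝ)+1)^3 := by
    have heq : (fun r : ℝ => ∫ θ in (0:ℝ)..π,
          θ * Real.log (‖(1 - (r:ℂ) * Complex.exp ((θ:ℝ) * Complex.I))‖))
        =ᶠ[nhdsWithin 1 (Set.Iio 1)]
        (fun r : ℝ =>
          ∑' n : ℕ, -(r^(n+1) * (((-1:ℝ)^(n+1) - 1) / ((n:ℝ)+1)^2) / ((n:ℝ)+1))) := by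
      filter_upwards [Ioo_mem_nhdsLT_of_mem (show (1:ℝ) ∈ Set.Ioc 0 1 by norm_num)]
        with r hr
      exact ((hasSum_integral_r r hr.1.le hr.2).tsum_eq).symm
    exact tendsto_nhds_unique (tendsto_integral_log.congr' heq) tendsto_S
  rw [hI, T_eq, zeta3]
  push_cast
  ring
end

section
/- $\int_0^\pi \theta^3 \log(2\sin(\theta/2))\,d\theta = \frac{9}{4}\pi^2\zeta(3) - \frac{93}{8}\zeta(5)$. -/
open Real MeasureTheory Filter Set intervalIntegral Topology

noncomputable def eterm (k : ℕ) : ℝ :=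
  3*π^2*((-1:ℝ)^k/(k:ℝ)^3) - 6*((-1:ℝ)^k/(k:ℝ)^5) + 6*(1/(k:ℝ)^5)

/-! ### Summability and values of the relevant series -/

lemma zsummable {p : ℕ} (hp : 1 < p) : Summable (fun n : ℕ => 1/(n:ℝ)^p) :=
  summable_one_div_nat_pow.2 hp

lemma asummable {p : ℕ} (hp : 1 < p) : Summable (fun n : ℕ => (-1:ℝ)^n/(n:ℝ)^p) := by
  refine Summable.of_norm_bounded (zsummable hp) fun n => ?_
  rw [norm_div, norm_pow, norm_neg, norm_one, one_pow]
  rw [Real.norm_eq_abs, abs_of_nonneg (by positivity)]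

lemma eterm_summable : Summable eterm := by
  have h3 : (1:ℕ) < 3 := by norm_num
  have h5 : (1:ℕ) < 5 := by norm_num
  exact (((asummable h3).mul_left (3*π^2)).sub ((asummable h5).mul_left 6)).add
    ((zsummable h5).mul_left 6)

lemma eterm_abs_le (k : ℕ) : |eterm k| ≤ (3*π^2 + 12) * (1/(k:ℝ)^3) := by
  rcases Nat.eq_zero_or_pos k with rfl | hk
  · simp [eterm]
  have hk1 : (1:ℝ) ≤ (k:ℝ) := by exact_mod_cast hk
  have h53 : 1/(k:ℝ)^5 ≤ 1/(k:ℝ)^3 := by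
    apply one_div_le_one_div_of_le (by positivity)
    exact pow_le_pow_right₀ hk1 (by norm_num)
  have habs : |(-1:ℝ)^k| = 1 := by rw [abs_pow]; simp
  have h1 : |eterm k| ≤ 3*π^2*(1/(k:ℝ)^3) + 6*(1/(k:ℝ)^5) + 6*(1/(k:ℝ)^5) := by
    unfold eterm
    calc |3*π^2*((-1:ℝ)^k/(k:ℝ)^3) - 6*((-1:ℝ)^k/(k:ℝ)^5) + 6*(1/(k:ℝ)^5)|
        ≤ |3*π^2*((-1:ℝ)^k/(k:ℝ)^3)| + |6*((-1:ℝ)^k/(k:ℝ)^5)| + |6*(1/(k:ℝ)^5)| := by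
          apply (abs_add_le _ _).trans
          gcongr
          exact abs_sub _ _
      _ = 3*π^2*(1/(k:ℝ)^3) + 6*(1/(k:ℝ)^5) + 6*(1/(k:ℝ)^5) := by
          simp [abs_mul, abs_div, habs, abs_of_nonneg Real.pi_pos.le,
            abs_of_nonneg (by positivity : (0:ℝ) ≤ (k:ℝ)^3),
            abs_of_nonneg (by positivity : (0:ℝ) ≤ (k:ℝ)^5), abs_pow]
  have h0 : (0:ℝ) < 1/(k:ℝ)^3 := by positivity
  nlinarith [h53, h1]

lemma tsum_alt {p : ℕ} (hp : 1 < p) :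
    (∑' n : ℕ, (-1:ℝ)^n/(n:ℝ)^p) = (2/2^p - 1) * ∑' n : ℕ, 1/(n:ℝ)^p := by
  have hz := zsummable hp
  have ha := asummable hp
  set g : ℕ → ℝ := fun n => ((-1:ℝ)^n + 1)/(n:ℝ)^p with hgdef
  have hg2k : ∀ k : ℕ, g (2*k) = (2/2^p) * (1/(k:ℝ)^p) := by
    intro k
    have h1 : ((-1:ℝ)^(2*k)) = 1 := (even_two_mul k).neg_one_pow
    simp only [hgdef]
    push_cast
    rw [h1, mul_pow, div_mul_div_comm]
    norm_num
  have hg2k1 : ∀ k : ℕ, g (2*k+1) = 0 := by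
    intro k
    have h1 : ((-1:ℝ)^(2*k+1)) = -1 := (odd_two_mul_add_one k).neg_one_pow
    simp only [hgdef]
    push_cast
    rw [h1]
    norm_num
  have hse : Summable (fun k : ℕ => g (2*k)) := by
    refine Summable.congr (hz.mul_left (2/2^p)) fun k => (hg2k k).symm
  have hso : Summable (fun k : ℕ => g (2*k+1)) := by
    refine Summable.congr summable_zero fun k => (hg2k1 k).symm
  have key := tsum_even_add_odd hse hso
  have he1 : (∑' k : ℕ, g (2*k)) = (2/2^p) * ∑' n : ℕ, 1/(n:ℝ)^p := by
    rw [tsum_congr hg2k, tsum_mul_left]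
  have ho1 : (∑' k : ℕ, g (2*k+1)) = 0 := by
    rw [tsum_congr hg2k1, tsum_zero]
  have hg_split : (∑' n : ℕ, g n)
      = (∑' n : ℕ, (-1:ℝ)^n/(n:ℝ)^p) + ∑' n : ℕ, 1/(n:ℝ)^p := by
    rw [← Summable.tsum_add ha hz]
    exact tsum_congr fun n => add_div _ _ _
  rw [he1, ho1, hg_split] at key
  linarith [key]

lemma S_eval :
    ∑' k : ℕ, eterm k
      = -(9/4*π^2*(∑' n : ℕ, 1/(n:ℝ)^3) - 93/8*(∑' n : ℕ, 1/(n:ℝ)^5)) := by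
  have h3 : (1:ℕ) < 3 := by norm_num
  have h5 : (1:ℕ) < 5 := by norm_num
  have s1 := (asummable h3).mul_left (3*π^2)
  have s2 := (asummable h5).mul_left (6:ℝ)
  have s3 := (zsummable h5).mul_left (6:ℝ)
  unfold eterm
  rw [Summable.tsum_add (s1.sub s2) s3, Summable.tsum_sub s1 s2, tsum_mul_left, tsum_mul_left, tsum_mul_left,
    tsum_alt h3, tsum_alt h5]
  ring

/-! ### The elementary integral `∫ θ^3 cos (n θ)` -/

lemma hasDerivAt_sin_smul (n : ℕ) (θ : ℝ) :
    HasDerivAt (fun θ : ℝ => Real.sin (n*θ)) (n * Real.cos (n*θ)) θ := by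
  simpa [mul_comm, Function.comp_def] using
    (Real.hasDerivAt_sin (n*θ)).comp θ ((hasDerivAt_id θ).const_mul (n:ℝ))

lemma hasDerivAt_cos_smul (n : ℕ) (θ : ℝ) :
    HasDerivAt (fun θ : ℝ => Real.cos (n*θ)) (-(n * Real.sin (n*θ))) θ := by
  simpa [mul_comm, Function.comp_def] using
    (Real.hasDerivAt_cos (n*θ)).comp θ ((hasDerivAt_id θ).const_mul (n:ℝ))

lemma integral_cube_cos (n : ℕ) (hn : 0 < n) :
    ∫ θ in (0:ℝ)..π, θ^3 * Real.cos (n*θ)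
      = 3*π^2*(-1)^n/n^2 - 6*(-1)^n/n^4 + 6/n^4 := by
  have hne : (n:ℝ) ≠ 0 := Nat.cast_ne_zero.2 hn.ne'
  set F : ℝ → ℝ := fun θ =>
    θ^3 * Real.sin (n*θ)/n + 3*θ^2 * Real.cos (n*θ)/n^2
      - 6*θ * Real.sin (n*θ)/n^3 - 6*Real.cos (n*θ)/n^4 with hF
  have hder : ∀ θ ∈ Set.uIcc (0:ℝ) π, HasDerivAt F (θ^3 * Real.cos (n*θ)) θ := by
    intro θ _
    have h1 := ((hasDerivAt_pow 3 θ).mul (hasDerivAt_sin_smul n θ)).div_const (n:ℝ)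
    have h2 := (((hasDerivAt_pow 2 θ).const_mul (3:ℝ)).mul
      (hasDerivAt_cos_smul n θ)).div_const ((n:ℝ)^2)
    have h3 := (((hasDerivAt_id θ).const_mul (6:ℝ)).mul
      (hasDerivAt_sin_smul n θ)).div_const ((n:ℝ)^3)
    have h4 := ((hasDerivAt_cos_smul n θ).const_mul (6:ℝ)).div_const ((n:ℝ)^4)
    have := ((h1.add h2).sub h3).sub h4
    refine this.congr_deriv ?_
    simp only [id_eq]
    field_simp
    ring
  have hcont : IntervalIntegrable (fun θ : ℝ => θ^3 * Real.cos (n*θ)) volume 0 π := by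
    apply Continuous.intervalIntegrable
    continuity
  rw [intervalIntegral.integral_eq_sub_of_hasDerivAt hder hcont]
  have hs : Real.sin (n*π) = 0 := Real.sin_nat_mul_pi n
  have hc : Real.cos (n*π) = (-1)^n := by
    simpa using Real.cos_nat_mul_pi_sub 0 n
  simp only [hF, hs, hc, mul_zero, zero_mul, Real.sin_zero, Real.cos_zero]
  field_simp
  ring

lemma integral_term (r : ℝ) (k : ℕ) (hk : 0 < k) :
    ∫ θ in (0:ℝ)..π, θ^3 * (r^k * Real.cos (k*θ)/k) = r^k * eterm k := by
  have h : (fun θ : ℝ => θ^3 * (r^k * Real.cos (k*θ)/k))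
      = fun θ : ℝ => (r^k/k) * (θ^3 * Real.cos (k*θ)) := by
    funext θ; ring
  rw [h, intervalIntegral.integral_const_mul, integral_cube_cos k hk]
  have hne : (k:ℝ) ≠ 0 := Nat.cast_ne_zero.2 hk.ne'
  unfold eterm
  field_simp

/-! ### The Fourier series of `-log |1 - r e^{iθ}|` -/

lemma hasSum_cos_series (r θ : ℝ) (hr0 : 0 ≤ r) (hr : r < 1) :
    HasSum (fun n : ℕ => r^(n+1) * Real.cos ((n+1)*θ)/(n+1))
      (-(1/2) * Real.log (1 - 2*r*Real.cos θ + r^2)) := by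
  set z : ℂ := (r:ℂ) * Complex.exp (θ * Complex.I) with hz
  have hznorm : ‖z‖ < 1 := by
    rw [hz, norm_mul, Complex.norm_exp_ofReal_mul_I, mul_one, Complex.norm_real,
      Real.norm_of_nonneg hr0]
    exact hr
  have H := Complex.hasSum_taylorSeries_neg_log hznorm
  have Hre := H.mapL Complex.reCLM
  have hterm : ∀ n : ℕ, Complex.reCLM (z^n / n) = r^n * Real.cos (n*θ)/n := by
    intro n
    have : z^n = ((r^n : ℝ) : ℂ) * Complex.exp ((n*θ : ℝ) * Complex.I) := by
      rw [hz, mul_pow, ← Complex.exp_nat_mul, ← Complex.ofReal_pow]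
      push_cast
      ring_nf
    simp only [Complex.reCLM_apply, this]
    rw [div_eq_mul_inv, ← Complex.ofReal_natCast, ← Complex.ofReal_inv]
    rw [mul_comm (((r^n:ℝ)):ℂ), mul_assoc, ← Complex.ofReal_mul, mul_comm,
      Complex.re_ofReal_mul, Complex.exp_ofReal_mul_I_re]
    ring
  have hzero : (fun n : ℕ => r^n * Real.cos (n*θ)/n) 0 = 0 := by simp
  have hre2 : Complex.reCLM (-Complex.log (1 - z))
      = -(1/2) * Real.log (1 - 2*r*Real.cos θ + r^2) := by
    have habs : ‖1 - z‖ = Real.sqrt (1 - 2*r*Real.cos θ + r^2) := by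
      rw [Complex.norm_def]
      congr 1
      rw [Complex.normSq_apply]
      have hre : (1 - z).re = 1 - r * Real.cos θ := by
        simp [hz, Complex.exp_ofReal_mul_I_re, Complex.exp_ofReal_mul_I_im]
      have him : (1 - z).im = -(r * Real.sin θ) := by
        simp [hz, Complex.exp_ofReal_mul_I_re, Complex.exp_ofReal_mul_I_im]
      rw [hre, him]
      have := Real.sin_sq_add_cos_sq θ
      nlinarith [this]
    simp only [Complex.reCLM_apply, Complex.neg_re, Complex.log_re, habs]
    have hnn : 0 ≤ 1 - 2*r*Real.cos θ + r^2 := by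
      nlinarith [Real.neg_one_le_cos θ, Real.cos_le_one θ, sq_nonneg (1-r), sq_nonneg (1+r)]
    rw [Real.log_sqrt hnn]
    ring
  rw [hre2] at Hre
  have Hre' : HasSum (fun n : ℕ => r^n * Real.cos (n*θ)/n)
      (-(1/2) * Real.log (1 - 2*r*Real.cos θ + r^2)) := by
    convert Hre using 1
    ext n
    exact (hterm n).symm
  have h2 := (hasSum_nat_add_iff' (f := fun n : ℕ => r^n * Real.cos (n*θ)/n) 1).2 Hre'
  simp only [Finset.range_one, Finset.sum_singleton, hzero, sub_zero] at h2
  rw [show (fun n : ℕ => r^(n+1) * Real.cos ((n+1)*θ)/(n+1))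
      = fun n : ℕ => r^(n+1) * Real.cos (((n+1:ℕ):ℝ)*θ)/((n+1:ℕ):ℝ) by ext n; norm_cast]
  exact h2

/-! ### Integrability lemmas -/

lemma integrableOn_abs_log_Ioc : IntegrableOn (fun x => |Real.log x|) (Ioc 0 π) := by
  have h1 : IntegrableOn (fun x : ℝ => -Real.log x) (Ioc (0:ℝ) 1) := by
    apply intervalIntegral.integrableOn_deriv_of_nonneg
      (g := fun x : ℝ => x - x * Real.log x)
    · exact (continuous_id.sub Real.continuous_mul_log).continuousOn
    · intro x hx
      have hx0 : x ≠ 0 := ne_of_gt hx.1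
      have := (hasDerivAt_id x).sub ((hasDerivAt_id x).mul (Real.hasDerivAt_log hx0))
      refine this.congr_deriv ?_
      simp only [id_eq, one_mul, mul_inv_cancel₀ hx0]
      ring
    · intro x hx
      simp only [neg_nonneg]
      exact Real.log_nonpos hx.1.le hx.2.le
  have h2 : IntegrableOn (fun x => |Real.log x|) (Ioc (0:ℝ) 1) := by
    simpa [IntegrableOn] using h1.abs
  have h3 : IntegrableOn (fun x => |Real.log x|) (Ioc (1:ℝ) π) := by
    have hc : ContinuousOn (fun x => |Real.log x|) (Icc (1:ℝ) π) :=
      (Real.continuousOn_log.mono (fun x hx => by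
        simp only [mem_compl_iff, mem_singleton_iff]
        exact ne_of_gt (lt_of_lt_of_le one_pos (hx.1)))).abs
    exact hc.integrableOn_Icc.mono_set Ioc_subset_Icc_self
  have hu : Ioc (0:ℝ) π = Ioc 0 1 ∪ Ioc 1 π := by
    rw [Ioc_union_Ioc_eq_Ioc (by norm_num) (by linarith [Real.pi_gt_three])]
  rw [hu]
  exact h2.union h3

lemma abs_log_sin_half_le {θ : ℝ} (hθ : θ ∈ Ioc (0:ℝ) π) :
    |Real.log (Real.sin (θ/2))| ≤ |Real.log θ| + Real.log π := by
  have hx0 : 0 < θ/2 := by linarith [hθ.1]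
  have hx2 : θ/2 ≤ π/2 := by linarith [hθ.2]
  have hsinpos : 0 < Real.sin (θ/2) :=
    Real.sin_pos_of_pos_of_lt_pi hx0 (lt_of_le_of_lt hx2 (by linarith [Real.pi_pos]))
  have hub : Real.log (Real.sin (θ/2)) ≤ Real.log θ - Real.log 2 := by
    calc Real.log (Real.sin (θ/2)) ≤ Real.log (θ/2) :=
          Real.log_le_log hsinpos (Real.sin_le hx0.le)
      _ = Real.log θ - Real.log 2 := Real.log_div (ne_of_gt hθ.1) two_ne_zero
  have hlb : Real.log θ - Real.log π ≤ Real.log (Real.sin (θ/2)) := by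
    have h := Real.mul_le_sin hx0.le hx2
    have h2 : 0 < 2/π * (θ/2) := by positivity
    calc Real.log θ - Real.log π = Real.log (2/π * (θ/2)) := by
          rw [Real.log_mul (ne_of_gt (by positivity)) (ne_of_gt hx0),
            Real.log_div two_ne_zero (ne_of_gt Real.pi_pos),
            Real.log_div (ne_of_gt hθ.1) two_ne_zero]
          ring
      _ ≤ Real.log (Real.sin (θ/2)) := Real.log_le_log h2 h
  have hlog2 : (0:ℝ) ≤ Real.log 2 := Real.log_nonneg one_le_two
  have hlogpi : Real.log 2 ≤ Real.log π :=
    Real.log_le_log two_pos (by linarith [Real.pi_gt_three])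
  rw [abs_le]
  have h1 := neg_abs_le (Real.log θ)
  have h2 := le_abs_self (Real.log θ)
  constructor <;> linarith

lemma integrableOn_abs_log_sin :
    IntegrableOn (fun θ => |Real.log (Real.sin (θ/2))|) (Ioc 0 π) := by
  have hmeas : AEStronglyMeasurable (fun θ => |Real.log (Real.sin (θ/2))|)
      (volume.restrict (Ioc 0 π)) :=
    ((Real.measurable_log.comp (Real.measurable_sin.comp
      (measurable_id.div_const 2))).abs).aestronglyMeasurable
  apply Integrable.mono' (g := fun θ => |Real.log θ| + Real.log π)
    (integrableOn_abs_log_Ioc.add (integrableOn_const (by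
      rw [Real.volume_Ioc]; exact ENNReal.ofReal_ne_top))) hmeas
  · filter_upwards [ae_restrict_mem measurableSet_Ioc] with θ hθ
    rw [Real.norm_eq_abs, abs_abs]
    exact abs_log_sin_half_le hθ

lemma integrableOn_main :
    IntegrableOn (fun θ => θ^3 * Real.log (2*Real.sin (θ/2))) (Ioc 0 π) := by
  have hmeas : AEStronglyMeasurable (fun θ : ℝ => θ^3 * Real.log (2*Real.sin (θ/2)))
      (volume.restrict (Ioc 0 π)) := by
    apply AEStronglyMeasurable.mul (measurable_id.pow_const 3).aestronglyMeasurable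
    exact (Real.measurable_log.comp ((Real.measurable_sin.comp
      (measurable_id.div_const 2)).const_mul 2)).aestronglyMeasurable
  apply Integrable.mono'
    (g := fun θ => π^3 * (Real.log 2 + |Real.log (Real.sin (θ/2))|))
    (((integrableOn_const (by
      rw [Real.volume_Ioc];
      exact ENNReal.ofReal_ne_top)).add integrableOn_abs_log_sin).const_mul _) hmeas
  filter_upwards [ae_restrict_mem measurableSet_Ioc] with θ hθ
  have hsinpos : 0 < Real.sin (θ/2) := Real.sin_pos_of_pos_of_lt_pi (by linarith [hθ.1])
    (by linarith [hθ.2, Real.pi_pos])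
  rw [Real.norm_eq_abs, abs_mul, Real.log_mul two_ne_zero (ne_of_gt hsinpos)]
  have h1 : |θ^3| ≤ π^3 := by
    rw [abs_pow]
    gcongr
    rw [abs_le]
    exact ⟨by linarith [hθ.1, Real.pi_pos], hθ.2⟩
  have h2 : |Real.log 2 + Real.log (Real.sin (θ/2))|
      ≤ Real.log 2 + |Real.log (Real.sin (θ/2))| := by
    calc _ ≤ |Real.log 2| + |Real.log (Real.sin (θ/2))| := abs_add_le _ _
      _ = _ := by rw [abs_of_nonneg (Real.log_nonneg one_le_two)]
  calc |θ^3| * |Real.log 2 + Real.log (Real.sin (θ/2))|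
      ≤ π^3 * (Real.log 2 + |Real.log (Real.sin (θ/2))|) := by
        apply mul_le_mul h1 h2 (abs_nonneg _) (by positivity)

/-! ### The series expansion of the regularised integral -/

lemma G_eq (r : ℝ) (hr0 : 0 ≤ r) (hr1 : r < 1) :
    (∫ θ in Ioc (0:ℝ) π, θ^3 * (-(1/2) * Real.log (1 - 2*r*Real.cos θ + r^2)))
      = ∑' n : ℕ, r^(n+1) * eterm (n+1) := by
  set F : ℕ → ℝ → ℝ :=
    fun n θ => θ^3 * (r^(n+1) * Real.cos (((n:ℝ)+1)*θ)/((n:ℝ)+1)) with hFdef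
  have hFc : ∀ n, Continuous (F n) := by
    intro n
    apply (continuous_pow 3).mul
    exact ((continuous_const.mul ((Real.continuous_cos.comp
      (continuous_const.mul continuous_id)))).div_const _)
  have hFi : ∀ n, Integrable (F n) (volume.restrict (Ioc 0 π)) := fun n =>
    ((hFc n).integrableOn_Ioc : IntegrableOn (F n) (Ioc 0 π) volume)
  have hFbound : ∀ n, ∀ θ ∈ Ioc (0:ℝ) π, ‖F n θ‖ ≤ π^3 * r^(n+1) := by
    intro n θ hθ
    rw [hFdef]
    simp only [Real.norm_eq_abs]
    rw [abs_mul]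
    have h1 : |θ^3| ≤ π^3 := by
      rw [abs_pow]
      gcongr
      rw [abs_le]
      exact ⟨by linarith [hθ.1, Real.pi_pos], hθ.2⟩
    have h2 : |r^(n+1) * Real.cos (((n:ℝ)+1)*θ)/((n:ℝ)+1)| ≤ r^(n+1) := by
      rw [abs_div, abs_mul]
      have hc := Real.abs_cos_le_one (((n:ℝ)+1)*θ)
      have hd : (1:ℝ) ≤ |((n:ℝ)+1)| := by
        rw [abs_of_nonneg (by positivity)]
        simp
      have ha : |r^(n+1)| * |Real.cos (((n:ℝ)+1)*θ)| ≤ |r^(n+1)| :=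
        mul_le_of_le_one_right (abs_nonneg _) hc
      have hb : |r^(n+1)| * |Real.cos (((n:ℝ)+1)*θ)| / |((n:ℝ)+1)|
          ≤ |r^(n+1)| * |Real.cos (((n:ℝ)+1)*θ)| :=
        div_le_self (by positivity) hd
      calc |r^(n+1)| * |Real.cos (((n:ℝ)+1)*θ)| / |((n:ℝ)+1)|
          ≤ |r^(n+1)| := hb.trans ha
        _ = r^(n+1) := abs_of_nonneg (by positivity)
    exact mul_le_mul h1 h2 (abs_nonneg _) (by positivity)
  have hnorm : Summable (fun n => ∫ θ in Ioc (0:ℝ) π, ‖F n θ‖) := by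
    apply Summable.of_nonneg_of_le
      (fun n => integral_nonneg (fun θ => norm_nonneg _))
      (fun n => ?_)
      ((summable_geometric_of_lt_one hr0 hr1).mul_left (π^3 * π * r))
    have : (∫ θ in Ioc (0:ℝ) π, ‖F n θ‖) ≤ ∫ _ in Ioc (0:ℝ) π, π^3 * r^(n+1) := by
      apply setIntegral_mono_on (hFi n).norm
        (integrableOn_const (by rw [Real.volume_Ioc]; exact ENNReal.ofReal_ne_top))
        measurableSet_Ioc
      exact hFbound n
    apply this.trans
    rw [setIntegral_const, measureReal_def, Real.volume_Ioc, smul_eq_mul,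
      ENNReal.toReal_ofReal (by rw [sub_zero]; exact Real.pi_pos.le : (0:ℝ) ≤ π - 0),
      sub_zero, pow_succ]
    exact le_of_eq (by ring)
  have swap := MeasureTheory.integral_tsum_of_summable_integral_norm hFi hnorm
  have hpt : ∀ θ : ℝ,
      (∑' n, F n θ) = θ^3 * (-(1/2) * Real.log (1 - 2*r*Real.cos θ + r^2)) := by
    intro θ
    have h := (hasSum_cos_series r θ hr0 hr1).mul_left (θ^3)
    have := h.tsum_eq
    rw [← this]
  calc (∫ θ in Ioc (0:ℝ) π, θ^3 * (-(1/2) * Real.log (1 - 2*r*Real.cos θ + r^2)))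
      = ∫ θ in Ioc (0:ℝ) π, (∑' n, F n θ) := by
        apply MeasureTheory.integral_congr_ae
        exact Eventually.of_forall (fun θ => (hpt θ).symm)
    _ = ∑' n, ∫ θ in Ioc (0:ℝ) π, F n θ := swap.symm
    _ = ∑' n : ℕ, r^(n+1) * eterm (n+1) := by
        apply tsum_congr
        intro n
        have h0 : (∫ θ in Ioc (0:ℝ) π, F n θ) = ∫ θ in (0:ℝ)..π, F n θ := by
          rw [intervalIntegral.integral_of_le Real.pi_pos.le]
        rw [h0]
        have := integral_term r (n+1) (Nat.succ_pos n)
        rw [← this]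
        apply intervalIntegral.integral_congr
        intro θ _
        rw [hFdef]
        push_cast
        ring

/-! ### The limits as `r → 1⁻` -/

lemma one_sub_cos (θ : ℝ) : 1 - Real.cos θ = 2 * Real.sin (θ/2)^2 := by
  have h := Real.cos_two_mul' (θ/2)
  have h2 := Real.sin_sq_add_cos_sq (θ/2)
  have he : (2:ℝ) * (θ/2) = θ := by ring
  rw [he] at h
  linarith

lemma tendsto_G :
    Tendsto (fun r => ∫ θ in Ioc (0:ℝ) π, θ^3 * (-(1/2) * Real.log (1 - 2*r*Real.cos θ + r^2)))
      (𝓝[Ico (1/2:ℝ) 1] 1)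
      (𝓝 (∫ θ in Ioc (0:ℝ) π, -(θ^3 * Real.log (2*Real.sin (θ/2))))) := by
  apply MeasureTheory.tendsto_integral_filter_of_dominated_convergence
    (bound := fun θ => (1/2) * π^3 * (Real.log 4 + Real.log 2) + π^3 * |Real.log (Real.sin (θ/2))|)
  · apply Eventually.of_forall
    intro r
    apply AEStronglyMeasurable.mul (measurable_id.pow_const 3).aestronglyMeasurable
    apply AEStronglyMeasurable.const_mul
    exact (Real.measurable_log.comp ((measurable_const.sub
      ((Real.measurable_cos.const_mul _))).add measurable_const)).aestronglyMeasurable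
  · filter_upwards [self_mem_nhdsWithin] with r hr
    filter_upwards [ae_restrict_mem measurableSet_Ioc] with θ hθ
    have hs : 0 < Real.sin (θ/2) := Real.sin_pos_of_pos_of_lt_pi (by linarith [hθ.1])
      (by linarith [hθ.2, Real.pi_pos])
    set s := Real.sin (θ/2) with hsdef
    have hq1 : 2*s^2 ≤ 1 - 2*r*Real.cos θ + r^2 := by
      have h1 := one_sub_cos θ
      nlinarith [hr.1, hr.2, sq_nonneg (1-r), hs]
    have hq2 : 1 - 2*r*Real.cos θ + r^2 ≤ 4 := by
      nlinarith [Real.neg_one_le_cos θ, hr.1, hr.2, sq_nonneg (1+r)]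
    have hqpos : 0 < 1 - 2*r*Real.cos θ + r^2 := lt_of_lt_of_le (by positivity) hq1
    have hlogub : Real.log (1 - 2*r*Real.cos θ + r^2) ≤ Real.log 4 :=
      Real.log_le_log hqpos hq2
    have hloglb : Real.log 2 + 2*Real.log s ≤ Real.log (1 - 2*r*Real.cos θ + r^2) := by
      have := Real.log_le_log (by positivity : (0:ℝ) < 2*s^2) hq1
      rw [Real.log_mul two_ne_zero (by positivity), Real.log_pow] at this
      push_cast at this
      linarith
    have hlog2 : (0:ℝ) ≤ Real.log 2 := Real.log_nonneg one_le_two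
    have hlog4 : (0:ℝ) ≤ Real.log 4 := Real.log_nonneg (by norm_num)
    have habs : |Real.log (1 - 2*r*Real.cos θ + r^2)| ≤
        Real.log 4 + Real.log 2 + 2*|Real.log s| := by
      rw [abs_le]
      have h1 := neg_abs_le (Real.log s)
      have h2 := le_abs_self (Real.log s)
      constructor <;> linarith
    rw [Real.norm_eq_abs, abs_mul, abs_mul]
    have hth : |θ^3| ≤ π^3 := by
      rw [abs_pow]
      gcongr
      rw [abs_le]
      exact ⟨by linarith [hθ.1, Real.pi_pos], hθ.2⟩
    have habs2 : |(-(1/2):ℝ)| = 1/2 := by norm_num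
    rw [habs2]
    calc |θ^3| * (1/2 * |Real.log (1 - 2*r*Real.cos θ + r^2)|)
        ≤ π^3 * (1/2 * (Real.log 4 + Real.log 2 + 2*|Real.log s|)) := by
          apply mul_le_mul hth (by linarith) (by positivity) (by positivity)
      _ = 1/2 * π^3 * (Real.log 4 + Real.log 2) + π^3 * |Real.log s| := by ring
  · apply Integrable.add
    · exact integrableOn_const (by rw [Real.volume_Ioc]; exact ENNReal.ofReal_ne_top)
    · exact integrableOn_abs_log_sin.const_mul _
  · filter_upwards [ae_restrict_mem measurableSet_Ioc] with θ hθ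
    have hs : 0 < Real.sin (θ/2) := Real.sin_pos_of_pos_of_lt_pi (by linarith [hθ.1])
      (by linarith [hθ.2, Real.pi_pos])
    have hq : Tendsto (fun r : ℝ => 1 - 2*r*Real.cos θ + r^2) (𝓝 1)
        (𝓝 (2 - 2*Real.cos θ)) := by
      have : Tendsto (fun r : ℝ => 1 - 2*r*Real.cos θ + r^2) (𝓝 1)
          (𝓝 (1 - 2*1*Real.cos θ + 1^2)) := by
        apply Continuous.tendsto
        continuity
      convert this using 2
      ring
    have h2c : 0 < 2 - 2*Real.cos θ := by
      have := one_sub_cos θ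
      nlinarith [hs]
    have hlog : Tendsto (fun r : ℝ => Real.log (1 - 2*r*Real.cos θ + r^2)) (𝓝 1)
        (𝓝 (Real.log (2 - 2*Real.cos θ))) :=
      (Real.continuousAt_log (ne_of_gt h2c)).tendsto.comp hq
    have hval : θ^3 * (-(1/2) * Real.log (2 - 2*Real.cos θ))
        = -(θ^3 * Real.log (2*Real.sin (θ/2))) := by
      have h1 : 2 - 2*Real.cos θ = (2*Real.sin (θ/2))^2 := by
        have := one_sub_cos θ
        nlinarith
      rw [h1, Real.log_pow]
      push_cast
      ring
    rw [← hval]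
    have := ((hlog.const_mul (-(1/2):ℝ)).const_mul (θ^3)).mono_left
      (nhdsWithin_le_nhds (s := Ico (1/2:ℝ) 1))
    simpa using this

lemma tendsto_P :
    Tendsto (fun r : ℝ => ∑' n : ℕ, r^(n+1) * eterm (n+1)) (𝓝[Ico (1/2:ℝ) 1] 1)
      (𝓝 (∑' n : ℕ, eterm (n+1))) := by
  have hu : Summable (fun n : ℕ => |eterm (n+1)|) :=
    ((summable_nat_add_iff 1).2 eterm_summable).abs
  have hcont : ContinuousOn (fun r : ℝ => ∑' n : ℕ, r^(n+1) * eterm (n+1)) (Icc (-1:ℝ) 1) := by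
    apply continuousOn_tsum (u := fun n => |eterm (n+1)|)
    · intro n
      exact ((continuous_pow (n+1)).mul continuous_const).continuousOn
    · exact hu
    · intro n x hx
      rw [Real.norm_eq_abs, abs_mul, abs_pow]
      have hx1 : |x| ≤ 1 := abs_le.2 ⟨hx.1, hx.2⟩
      calc |x|^(n+1) * |eterm (n+1)| ≤ 1^(n+1) * |eterm (n+1)| := by
            gcongr
        _ = |eterm (n+1)| := by rw [one_pow, one_mul]
  have hmem : (1:ℝ) ∈ Icc (-1:ℝ) 1 := ⟨by norm_num, le_refl 1⟩
  have h1 : Tendsto (fun r : ℝ => ∑' n : ℕ, r^(n+1) * eterm (n+1)) (𝓝[Icc (-1:ℝ) 1] 1)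
      (𝓝 (∑' n : ℕ, (1:ℝ)^(n+1) * eterm (n+1))) := hcont.continuousWithinAt hmem
  have h2 : (∑' n : ℕ, (1:ℝ)^(n+1) * eterm (n+1)) = ∑' n : ℕ, eterm (n+1) := by
    apply tsum_congr; intro n; rw [one_pow, one_mul]
  rw [h2] at h1
  exact h1.mono_left (nhdsWithin_mono 1 (fun x hx => ⟨by linarith [hx.1], hx.2.le⟩))

lemma zeta_cast {p : ℕ} (hp : 1 < p) :
    ((∑' n : ℕ, 1/(n:ℝ)^p : ℝ) : ℂ) = riemannZeta p := by
  rw [zeta_nat_eq_tsum_of_gt_one hp, Complex.ofReal_tsum]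
  apply tsum_congr
  intro n
  push_cast
  ring

/-! ### Main theorem -/

lemma real_version :
    (∫ θ in (0:ℝ)..π, θ^3 * Real.log (2 * Real.sin (θ/2)))
      = 9/4*π^2*(∑' n : ℕ, 1/(n:ℝ)^3) - 93/8*(∑' n : ℕ, 1/(n:ℝ)^5) := by
  have hne : (𝓝[Ico (1/2:ℝ) 1] (1:ℝ)).NeBot := by
    rw [← mem_closure_iff_nhdsWithin_neBot, closure_Ico (by norm_num : (1/2:ℝ) ≠ 1)]
    exact ⟨by norm_num, le_refl 1⟩
  have hTG' : Tendsto
      (fun r => ∫ θ in Ioc (0:ℝ) π, θ^3 * (-(1/2) * Real.log (1 - 2*r*Real.cos θ + r^2)))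
      (𝓝[Ico (1/2:ℝ) 1] 1) (𝓝 (∑' n : ℕ, eterm (n+1))) := by
    apply tendsto_P.congr'
    filter_upwards [self_mem_nhdsWithin] with r hr
    exact (G_eq r (by linarith [hr.1]) hr.2).symm
  have huniq : (∫ θ in Ioc (0:ℝ) π, -(θ^3 * Real.log (2*Real.sin (θ/2))))
      = ∑' n : ℕ, eterm (n+1) := tendsto_nhds_unique tendsto_G hTG'
  have hshift : (∑' n : ℕ, eterm (n+1)) = ∑' k : ℕ, eterm k := by
    rw [Summable.tsum_eq_zero_add eterm_summable]
    have : eterm 0 = 0 := by simp [eterm]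
    rw [this, zero_add]
  have hI : (∫ θ in Ioc (0:ℝ) π, θ^3 * Real.log (2*Real.sin (θ/2)))
      = -(∑' k : ℕ, eterm k) := by
    have := huniq
    rw [MeasureTheory.integral_neg] at this
    rw [hshift] at this
    linarith [this]
  rw [intervalIntegral.integral_of_le Real.pi_pos.le, hI, S_eval]
  ring

theorem ls5_3_pi :
    ((∫ θ in (0:ℝ)..π, θ^3 * Real.log (2 * Real.sin (θ/2)) : ℝ) : ℂ)
      = 9/4 * (π : ℂ)^2 * riemannZeta 3 - 93/8 * riemannZeta 5 := by
  rw [real_version]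
  have h3 : riemannZeta 3 = ((∑' n : ℕ, 1/(n:ℝ)^3 : ℝ) : ℂ) := by
    rw [zeta_cast (by norm_num : (1:ℕ) < 3)]
    norm_num
  have h5 : riemannZeta 5 = ((∑' n : ℕ, 1/(n:ℝ)^5 : ℝ) : ℂ) := by
    rw [zeta_cast (by norm_num : (1:ℕ) < 5)]
    norm_num
  rw [h3, h5]
  push_cast
  ring
end
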